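/- arXiv:1806.11443 — 16 statements merged into one kernel-verified Lean document; each statement's English description precedes it below -/
import Mathlib

section
/- Let R be a commutative ring with 1 ≠ 0 and T(R) its total ring of fractions. The graph Γ̃(R) is complete if and only if Γ̃(T(R)) is complete. -/
/-- x is a zero-divisor (including 0 in a nontrivial ring). -/
def IsZD {R : Type} [CommRing R] (x : R) : Prop := ∃ y : R, y ≠ 0 ∧ x * y = 0

/-- Adjacency relation of the graph Γ̃(R): xy = 0 or x + y ∈ Z(R). -/
def GTAdj {R : Type} [CommRing R] (x y : R) : Prop := x * y = 0 ∨ IsZD (x + y)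

/-- Γ̃(R) is a complete graph: any two distinct nonzero zero-divisors are adjacent. -/
def GTComplete (R : Type) [CommRing R] : Prop :=
  ∀ x y : R, IsZD x → x ≠ 0 → IsZD y → y ≠ 0 → x ≠ y → GTAdj x y

section Aux

variable {R : Type} [CommRing R] [Nontrivial R]

local notation "K" => FractionRing R
local notation "f" => algebraMap R (FractionRing R)

lemma finj : Function.Injective (algebraMap R (FractionRing R)) :=
  IsFractionRing.injective R (FractionRing R)

lemma cancel_s (s : nonZeroDivisors R) {u v : K} (h : u * f s = v * f s) : u = v := by
  have hu : IsUnit ((algebraMap R K) s) := IsLocalization.map_units K s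
  obtain ⟨w, hw⟩ := hu
  have : u * w * w.inv = v * w * w.inv := by rw [hw]; rw [h]
  simpa [mul_assoc, w.val_inv] using this

lemma zd_map_iff {a : R} : IsZD ((algebraMap R (FractionRing R)) a) ↔ IsZD a := by
  constructor
  · rintro ⟨t, ht0, ht⟩
    obtain ⟨⟨r, s⟩, hrs⟩ := IsLocalization.surj (nonZeroDivisors R) t
    refine ⟨r, ?_, ?_⟩
    · rintro rfl
      apply ht0
      have : t * f s = (0 : K) * f s := by simpa using hrs
      exact (cancel_s s this).trans rfl
    · apply finj
      have : f (a * r) = f a * t * f s := by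
        rw [map_mul, ← hrs]; ring
      rw [this, ht, zero_mul, map_zero]
  · rintro ⟨z, hz0, hz⟩
    exact ⟨f z, fun h => hz0 (finj (h.trans (map_zero f).symm)),
      by rw [← map_mul, hz, map_zero]⟩

end Aux

theorem stmt0 (R : Type) [CommRing R] [Nontrivial R] :
    GTComplete R ↔ GTComplete (FractionRing R) := by
  set K := FractionRing R
  set f := algebraMap R K with hf
  constructor
  · intro hR X Y hX hX0 hY hY0 hXY
    obtain ⟨⟨a, s⟩, has⟩ := IsLocalization.surj (nonZeroDivisors R) X
    obtain ⟨⟨b, t⟩, hbt⟩ := IsLocalization.surj (nonZeroDivisors R) Y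
    set a' := a * (t : R) with ha'
    set b' := b * (s : R) with hb'
    have hXst : X * f (s * t : nonZeroDivisors R) = f a' := by
      push_cast [map_mul]
      rw [← mul_assoc, has, ← map_mul]
    have hYst : Y * f (s * t : nonZeroDivisors R) = f b' := by
      push_cast [map_mul]
      rw [mul_comm (f s) (f t), ← mul_assoc, hbt, ← map_mul]
    -- a' is a zero divisor
    obtain ⟨w, hw0, hw⟩ := hX
    have hZa : IsZD a' := zd_map_iff.mp ⟨w, hw0, by
      rw [← hXst]; rw [mul_comm X _, mul_assoc, hw, mul_zero]⟩
    obtain ⟨w', hw'0, hw'⟩ := hY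
    have hZb : IsZD b' := zd_map_iff.mp ⟨w', hw'0, by
      rw [← hYst]; rw [mul_comm Y _, mul_assoc, hw', mul_zero]⟩
    have ha'0 : a' ≠ 0 := by
      rintro h
      apply hX0
      have : X * f (s * t : nonZeroDivisors R) = 0 * f (s * t : nonZeroDivisors R) := by
        rw [hXst, h, map_zero, zero_mul]
      exact cancel_s _ this
    have hb'0 : b' ≠ 0 := by
      rintro h
      apply hY0
      have : Y * f (s * t : nonZeroDivisors R) = 0 * f (s * t : nonZeroDivisors R) := by
        rw [hYst, h, map_zero, zero_mul]
      exact cancel_s _ this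
    have hab : a' ≠ b' := by
      rintro h
      apply hXY
      apply cancel_s (s * t)
      rw [hXst, hYst, h]
    rcases hR a' b' hZa ha'0 hZb hb'0 hab with h | ⟨z, hz0, hz⟩
    · left
      apply cancel_s (s * t)
      apply cancel_s (s * t)
      have : X * Y * f (s*t : nonZeroDivisors R) * f (s*t : nonZeroDivisors R)
          = f a' * f b' := by rw [← hXst, ← hYst]; ring
      rw [this, ← map_mul, h, map_zero]
      ring
    · right
      refine ⟨f z, fun h => hz0 (finj (h.trans (map_zero f).symm)), ?_⟩
      apply cancel_s (s * t)
      have : (X + Y) * f z * f (s*t : nonZeroDivisors R) = f ((a' + b') * z) := by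
        rw [map_mul, map_add, ← hXst, ← hYst]; ring
      rw [this, hz, map_zero, zero_mul]
  · intro hK x y hx hx0 hy hy0 hxy
    have hfx : IsZD (f x) := zd_map_iff.mpr hx
    have hfy : IsZD (f y) := zd_map_iff.mpr hy
    have hfx0 : f x ≠ 0 := fun h => hx0 (finj (h.trans (map_zero f).symm))
    have hfy0 : f y ≠ 0 := fun h => hy0 (finj (h.trans (map_zero f).symm))
    have hfxy : f x ≠ f y := fun h => hxy (finj h)
    rcases hK (f x) (f y) hfx hfx0 hfy hfy0 hfxy with h | h
    · left; exact finj (by rw [map_mul, h, map_zero])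
    · right; exact zd_map_iff.mp (by rwa [map_add])
end

section
/- Let R ≅ R₁ × ⋯ × Rₙ be a product of n ≥ 3 nontrivial commutative rings. If Γ̃(R) is complete, then R is a Boolean ring (every element is idempotent). -/
lemma isZD_map {A B : Type} [CommRing A] [CommRing B] (f : A ≃+* B) {x : A}
    (h : IsZD x) : IsZD (f x) := by
  obtain ⟨y, hy, hxy⟩ := h
  refine ⟨f y, ?_, by rw [← map_mul, hxy, map_zero]⟩
  intro h'
  exact hy (f.injective (by rw [h', map_zero]))

theorem stmt1 (n : ℕ) (hn : 3 ≤ n) (S : Fin n → Type) [∀ i, CommRing (S i)]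
    [∀ i, Nontrivial (S i)] (R : Type) [CommRing R] (e : R ≃+* ∀ i, S i)
    (h : GTComplete R) : ∀ x : R, x * x = x := by
  -- transfer completeness to the product ring
  have hP : GTComplete (∀ i, S i) := by
    intro x y hx hx0 hy hy0 hxy
    have hx0' : e.symm x ≠ 0 := fun h0 => hx0 (by
      have := congrArg e h0
      simpa using this)
    have hy0' : e.symm y ≠ 0 := fun h0 => hy0 (by
      have := congrArg e h0
      simpa using this)
    have hxy' : e.symm x ≠ e.symm y := fun h0 => hxy (e.symm.injective h0)
    have hadj := h (e.symm x) (e.symm y) (isZD_map e.symm hx) hx0'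
      (isZD_map e.symm hy) hy0' hxy'
    rcases hadj with h0 | hz
    · left
      have : e.symm (x * y) = 0 := by rw [map_mul]; exact h0
      have := congrArg e this
      simpa using this
    · right
      have : IsZD (e.symm (x + y)) := by rw [map_add]; exact hz
      have := isZD_map e this
      simpa using this
  -- each component ring is Boolean
  have hcomp : ∀ (i : Fin n) (a : S i), a * a = a := by
    intro i a
    have h0n : (0 : ℕ) < n := by omega
    have h1n : (1 : ℕ) < n := by omega
    have h2n : (2 : ℕ) < n := by omega
    set j : Fin n := if i = ⟨0, h0n⟩ then ⟨1, h1n⟩ else ⟨0, h0n⟩ with hj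
    set k : Fin n := if i = ⟨2, h2n⟩ then ⟨1, h1n⟩ else ⟨2, h2n⟩ with hk
    have hji : j ≠ i := by
      rw [hj]; split_ifs with h1 <;> simp_all [Fin.ext_iff] <;> omega
    have hki : k ≠ i := by
      rw [hk]; split_ifs with h1 <;> simp_all [Fin.ext_iff] <;> omega
    have hkj : k ≠ j := by
      rw [hj, hk]; split_ifs with h1 h2 <;> simp_all [Fin.ext_iff] <;> omega
    -- x : a at i, 0 at j, 1 elsewhere
    set u : ∀ m, S m := fun m => if m = i then 0 else if m = j then 0 else 1 with hu
    set x : ∀ m, S m := Pi.single i a + u with hx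
    set y : ∀ m, S m := 1 - x with hy
    have hxi : x i = a := by
      simp [hx, hu, Pi.single_eq_same]
    have hxj : x j = 0 := by
      simp [hx, hu, Pi.single_eq_of_ne hji, hji]
    have hxk : x k = 1 := by
      simp [hx, hu, Pi.single_eq_of_ne hki, hki, hkj]
    have hyj : y j = 1 := by simp [hy, hxj]
    have hyk : y k = 0 := by simp [hy, hxk]
    have hx0 : x ≠ 0 := fun h0 => by
      have := congrFun h0 k
      rw [hxk] at this
      exact one_ne_zero this
    have hy0 : y ≠ 0 := fun h0 => by
      have := congrFun h0 j
      rw [hyj] at this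
      exact one_ne_zero this
    have hxy : x ≠ y := fun h0 => by
      have := congrFun h0 j
      rw [hxj, hyj] at this
      exact zero_ne_one this
    have hxZD : IsZD x := by
      refine ⟨Pi.single j 1, ?_, ?_⟩
      · intro h0
        have := congrFun h0 j
        rw [Pi.single_eq_same] at this
        exact one_ne_zero this
      · funext m
        by_cases hm : m = j
        · subst hm; simp [hxj]
        · simp [Pi.single_eq_of_ne hm]
    have hyZD : IsZD y := by
      refine ⟨Pi.single k 1, ?_, ?_⟩
      · intro h0
        have := congrFun h0 k
        rw [Pi.single_eq_same] at this
        exact one_ne_zero this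
      · funext m
        by_cases hm : m = k
        · subst hm; simp [hyk]
        · simp [Pi.single_eq_of_ne hm]
    have hadj := hP x y hxZD hx0 hyZD hy0 hxy
    have hxysum : x + y = 1 := by rw [hy]; ring
    rcases hadj with h0 | hz
    · have := congrFun h0 i
      rw [Pi.mul_apply, Pi.zero_apply, hxi] at this
      have hyi : y i = 1 - a := by simp [hy, hxi]
      rw [hyi] at this
      have : a - a * a = 0 := by rw [← this]; ring
      have := sub_eq_zero.mp this
      exact this.symm
    · exfalso
      rw [hxysum] at hz
      obtain ⟨z, hz0, hz1⟩ := hz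
      rw [one_mul] at hz1
      exact hz0 hz1
  -- conclude for R
  intro r
  apply e.injective
  rw [map_mul]
  funext m
  exact hcomp m (e r m)
end

section
/- If R is (up to isomorphism) a subring of a product of two integral domains, then Γ̃(R) is complete. -/
/-- Auxiliary: R embeds as a subring in A × B with A, B integral domains. -/
def EmbedsInProdDomainsAux (R A B : Type) [CommRing R] [CommRing A] [CommRing B] : Prop :=
  IsDomain A ∧ IsDomain B ∧ ∃ f : R →+* A × B, Function.Injective f

/-- R is (up to isomorphism) a subring of a product of two integral domains. -/
def EmbedsInProdDomains (R : Type) [iR : CommRing R] : Prop :=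
  ∃ (A B : Type) (iA : CommRing A) (iB : CommRing B), @EmbedsInProdDomainsAux R A B iR iA iB

theorem stmt2 (R : Type) [CommRing R] [Nontrivial R] (h : EmbedsInProdDomains R) :
    GTComplete R := by
  obtain ⟨A, B, iA, iB, hA, hB, f, hf⟩ := h
  haveI := hA; haveI := hB
  intro x y hxz hx hyz hy hxy
  obtain ⟨u, hu, hxu⟩ := hxz
  obtain ⟨v, hv, hyv⟩ := hyz
  have fne : ∀ w : R, w ≠ 0 → f w ≠ 0 := fun w hw h0 =>
    hw (hf (by rw [h0, map_zero]))
  have mulz : ∀ w t : R, w * t = 0 →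
      (f w).1 * (f t).1 = 0 ∧ (f w).2 * (f t).2 = 0 := by
    intro w t hwt
    have : f w * f t = 0 := by rw [← map_mul, hwt, map_zero]
    exact ⟨congrArg Prod.fst this, congrArg Prod.snd this⟩
  have key : ∀ w t : R, t ≠ 0 → w * t = 0 → (f w).1 = 0 ∨ (f w).2 = 0 := by
    intro w t ht hwt
    obtain ⟨h1, h2⟩ := mulz w t hwt
    rcases mul_eq_zero.mp h1 with ha | ha
    · exact Or.inl ha
    · rcases mul_eq_zero.mp h2 with hb | hb
      · exact Or.inr hb
      · exact absurd (Prod.ext ha hb) (fne t ht)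
  -- witness lemma for the "same coordinate zero" case (first coordinate)
  have case1 : ∀ w t u : R, u ≠ 0 → w * u = 0 → w ≠ 0 → (f w).1 = 0 → (f t).1 = 0 →
      IsZD (w + t) := by
    intro w t u hu hwu hw hw1 ht1
    obtain ⟨h1, h2⟩ := mulz w u hwu
    have hw2 : (f w).2 ≠ 0 := by
      intro h0; exact fne w hw (Prod.ext hw1 h0)
    have hu2 : (f u).2 = 0 := by
      rcases mul_eq_zero.mp h2 with h | h
      · exact absurd h hw2
      · exact h
    refine ⟨u, hu, hf ?_⟩
    rw [map_mul, map_zero, map_add]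
    ext
    · show ((f w).1 + (f t).1) * (f u).1 = 0
      rw [hw1, ht1, add_zero, zero_mul]
    · show ((f w).2 + (f t).2) * (f u).2 = 0
      rw [hu2, mul_zero]
  have case2 : ∀ w t u : R, u ≠ 0 → w * u = 0 → w ≠ 0 → (f w).2 = 0 → (f t).2 = 0 →
      IsZD (w + t) := by
    intro w t u hu hwu hw hw2 ht2
    obtain ⟨h1, h2⟩ := mulz w u hwu
    have hw1 : (f w).1 ≠ 0 := by
      intro h0; exact fne w hw (Prod.ext h0 hw2)
    have hu1 : (f u).1 = 0 := by
      rcases mul_eq_zero.mp h1 with h | h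
      · exact absurd h hw1
      · exact h
    refine ⟨u, hu, hf ?_⟩
    rw [map_mul, map_zero, map_add]
    ext
    · show ((f w).1 + (f t).1) * (f u).1 = 0
      rw [hu1, mul_zero]
    · show ((f w).2 + (f t).2) * (f u).2 = 0
      rw [hw2, ht2, add_zero, zero_mul]
  rcases key x u hu hxu with hx1 | hx2 <;> rcases key y v hv hyv with hy1 | hy2
  · exact Or.inr (case1 x y u hu hxu hx hx1 hy1)
  · left
    apply hf
    rw [map_mul, map_zero]
    ext
    · show (f x).1 * (f y).1 = 0; rw [hx1, zero_mul]
    · show (f x).2 * (f y).2 = 0; rw [hy2, mul_zero]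
  · left
    apply hf
    rw [map_mul, map_zero]
    ext
    · show (f x).1 * (f y).1 = 0; rw [hy1, mul_zero]
    · show (f x).2 * (f y).2 = 0; rw [hx2, zero_mul]
  · exact Or.inr (case2 x y u hu hxu hx hx2 hy2)
end

section
/- Let R be a commutative ring with 1 ≠ 0. The graph Γ̃(R) is complete if and only if R is Boolean, or Z(R) is an ideal of R, or R is isomorphic to a subring of a product of two integral domains. -/
section Aux

variable {R : Type} [CommRing R]

lemma regular_mul {s y : R} (hs : ¬ IsZD s) (h : s * y = 0) : y = 0 := by
  by_contra h0; exact hs ⟨y, h0, h⟩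

/-- Key consequence of completeness: if `s` is regular and `x`, `s - x` are both
zero-divisors, then `x * (s - x) = 0`. -/
lemma estar (hC : GTComplete R) {s : R} (hs : ¬ IsZD s) {x : R}
    (hx : IsZD x) (hx' : IsZD (s - x)) : x * (s - x) = 0 := by
  by_cases hx0 : x = 0
  · rw [hx0, zero_mul]
  by_cases hsx0 : s - x = 0
  · exact absurd (show IsZD s by rw [sub_eq_zero.mp hsx0]; exact hx) hs
  by_cases heq : x = s - x
  · obtain ⟨y, hy0, hxy⟩ := hx
    exact absurd (show IsZD s from ⟨y, hy0, by linear_combination y * heq.symm + 2 * hxy⟩) hs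
  rcases hC x (s - x) hx hx0 hx' hsx0 heq with h | h
  · exact h
  · rw [show x + (s - x) = s from by ring] at h
    exact absurd h hs

/-- The "mechanism" lemma: from a bad pair `(a, b)` together with auxiliary elements
`p, q` annihilating `b`, we get that the ring is Boolean modulo the annihilator of `b`. -/
lemma mech (hC : GTComplete R) {a b p q : R} (hab : a * b = 0)
    (hs : ¬ IsZD (a + b)) (hp0 : p ≠ 0) (hpb : p * b = 0)
    (hpp : p * p = (a + b) * p) (hq0 : q ≠ 0) (hqb : q * b = 0)
    (hpq : p * q = 0) : ∀ x : R, (x * x - x) * b = 0 := by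
  intro x
  have hξ : IsZD (x * b + p) := ⟨q, hq0, by linear_combination x * hqb + hpq⟩
  have hη : IsZD ((a + b) - (x * b + p)) := ⟨p, hp0, by linear_combination (-1 : R) * hpp - x * hpb⟩
  have key := estar hC hs hξ hη
  have key2 : ((x * x - x) * b) * (a + b) = 0 := by
    linear_combination -key + x ^ 2 * hab - 2 * x * hpb - hpp
  by_contra h0
  exact hs ⟨(x * x - x) * b, h0, by linear_combination key2⟩

/-- If the annihilator of `a` fails primality for a bad pair `(a,b)`, the ring is Boolean. -/
lemma boolean_of_bad (hC : GTComplete R) {a b u v : R} (ha0 : a ≠ 0) (hb0 : b ≠ 0)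
    (hab : a * b = 0) (hs : ¬ IsZD (a + b))
    (huva : u * v * a = 0) (hua : u * a ≠ 0) (hva : v * a ≠ 0) :
    ∀ x : R, x * x = x := by
  -- E1 relations
  have hE1u : (u * a) * (u * a) = (a + b) * (u * a) := by
    have hξ : IsZD (u * a + b) := ⟨v * a, hva, by linear_combination a * huva + v * hab⟩
    have hη : IsZD ((a + b) - (u * a + b)) := ⟨b, hb0, by linear_combination (1 - u) * hab⟩
    have key := estar hC hs hξ hη
    linear_combination -key + (1 - 2 * u) * hab
  have hE1v : (v * a) * (v * a) = (a + b) * (v * a) := by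
    have hξ : IsZD (v * a + b) := ⟨u * a, hua, by linear_combination a * huva + u * hab⟩
    have hη : IsZD ((a + b) - (v * a + b)) := ⟨b, hb0, by linear_combination (1 - v) * hab⟩
    have key := estar hC hs hξ hη
    linear_combination -key + (1 - 2 * v) * hab
  -- mech instances
  have Gb : ∀ x : R, (x * x - x) * b = 0 :=
    mech hC hab hs hua (by linear_combination u * hab) hE1u hva
      (by linear_combination v * hab) (by linear_combination a * huva)
  have Gp : ∀ x : R, (x * x - x) * (u * a) = 0 := by
    have h1 : ((a + b) - u * a) * (u * a) = 0 := by linear_combination -hE1u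
    have h2 : ¬ IsZD (((a + b) - u * a) + u * a) := by
      rw [show ((a + b) - u * a) + u * a = a + b from by ring]; exact hs
    exact mech hC h1 h2 hva (by linear_combination a * huva)
      (by linear_combination hE1v) hb0 (by linear_combination u * hab)
      (by linear_combination v * hab)
  have Gq : ∀ x : R, (x * x - x) * (v * a) = 0 := by
    have h1 : ((a + b) - v * a) * (v * a) = 0 := by linear_combination -hE1v
    have h2 : ¬ IsZD (((a + b) - v * a) + v * a) := by
      rw [show ((a + b) - v * a) + v * a = a + b from by ring]; exact hs
    exact mech hC h1 h2 hua (by linear_combination a * huva)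
      (by linear_combination hE1u) hb0 (by linear_combination v * hab)
      (by linear_combination u * hab)
  intro x
  by_contra hne
  have hz0 : x * x - x ≠ 0 := sub_ne_zero.mpr hne
  have zb : (x * x - x) * b = 0 := Gb x
  have zp : (x * x - x) * (u * a) = 0 := Gp x
  have zq : (x * x - x) * (v * a) = 0 := Gq x
  -- X := (x*x - x) * a is nonzero
  have hX0 : (x * x - x) * a ≠ 0 := by
    intro h
    exact hs ⟨x * x - x, hz0, by linear_combination h + zb⟩
  -- step 4b : z^2 = -X
  have hzZD : IsZD (x * x - x) := ⟨b, hb0, zb⟩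
  have haZD : IsZD a := ⟨b, hb0, hab⟩
  have hza : x * x - x ≠ a := by
    intro h
    have h1 : a * (u * a) = 0 := by linear_combination zp - (u * a) * h
    have h2 : (a + b) * (u * a) = 0 := by linear_combination h1 + u * hab
    exact hua (regular_mul hs h2)
  have hzaZD : IsZD ((x * x - x) + a) := by
    rcases hC (x * x - x) a hzZD hz0 haZD ha0 hza with h | h
    · exact absurd h hX0
    · exact h
  have hη : IsZD ((a + b) - ((x * x - x) + a)) := ⟨u * a, hua, by linear_combination u * hab - zp⟩
  have key4b := estar hC hs hzaZD hη
  have R1 : (x * x - x) * (x * x - x) + (x * x - x) * a = 0 := by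
    linear_combination -key4b + zb + hab
  -- step 4c : X^2 = -sX
  have hXb : ((x * x - x) * a) * b = 0 := by linear_combination (x * x - x) * hab
  have hXZD : IsZD ((x * x - x) * a) := ⟨b, hb0, hXb⟩
  have hpX : (u * a) * ((x * x - x) * a) = 0 := by linear_combination a * zp
  have hqX : (v * a) * ((x * x - x) * a) = 0 := by linear_combination a * zq
  have hspZD : IsZD ((a + b) - u * a) := ⟨u * a, hua, by linear_combination -hE1u⟩
  have hsp0 : (a + b) - u * a ≠ 0 := by
    intro h
    exact hs ⟨b, hb0, by linear_combination b * h + u * hab⟩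
  have hXnesp : (x * x - x) * a ≠ (a + b) - u * a := by
    intro h
    exact hs ⟨b, hb0, by linear_combination -b * h + hXb + u * hab⟩
  have hαZD : IsZD (((x * x - x) * a) + ((a + b) - u * a)) := by
    rcases hC ((x * x - x) * a) ((a + b) - u * a) hXZD hX0 hspZD hsp0 hXnesp with h | h
    · exfalso
      have hsX : (a + b) * ((x * x - x) * a) = 0 := by linear_combination h + hpX
      exact hX0 (regular_mul hs hsX)
    · exact h
  have hβZD : IsZD ((a + b) - (((x * x - x) * a) + ((a + b) - u * a))) :=
    ⟨b, hb0, by linear_combination u * hab - hXb⟩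
  have key4c := estar hC hs hαZD hβZD
  have R2 : ((x * x - x) * a) * ((x * x - x) * a) + (a + b) * ((x * x - x) * a) = 0 := by
    linear_combination -key4c + 2 * hpX - hE1u
  -- step 4d : mech instance for X
  have Gx : ∀ w : R, (w * w - w) * (-((x * x - x) * a)) = 0 := by
    have h1 : ((a + b) + (x * x - x) * a) * (-((x * x - x) * a)) = 0 := by
      linear_combination -R2
    have h2 : ¬ IsZD (((a + b) + (x * x - x) * a) + -((x * x - x) * a)) := by
      rw [show ((a + b) + (x * x - x) * a) + -((x * x - x) * a) = a + b from by ring]; exact hs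
    exact mech hC h1 h2 hua (by linear_combination -hpX) (by linear_combination hE1u)
      hva (by linear_combination -hqX) (by linear_combination a * huva)
  -- step 4e : sX = X
  have hGs := Gx (a + b)
  have hsXX : (a + b) * ((a + b) * ((x * x - x) * a) - (x * x - x) * a) = 0 := by
    linear_combination -hGs
  have R3 : (a + b) * ((x * x - x) * a) = (x * x - x) * a :=
    sub_eq_zero.mp (regular_mul hs hsXX)
  -- step 4f : zX = -X
  have hzX : (x * x - x) * ((x * x - x) * a) + ((x * x - x) * a) = 0 := by
    linear_combination a * R1 - R3 + a * zb
  -- conclusion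
  have hfin := Gx x
  exact hX0 (by linear_combination hfin + hzX)

/-- an annihilator ideal -/
def annIdeal (a : R) : Ideal R where
  carrier := {z : R | z * a = 0}
  add_mem' := by
    intro x y hx hy
    simp only [Set.mem_setOf_eq] at *
    rw [add_mul, hx, hy, add_zero]
  zero_mem' := by simp
  smul_mem' := by
    intro c z hz
    simp only [smul_eq_mul, Set.mem_setOf_eq] at *
    rw [mul_assoc, hz, mul_zero]

lemma mem_annIdeal {a x : R} : x ∈ annIdeal a ↔ x * a = 0 := Iff.rfl

end Aux

theorem stmt4 (R : Type) [CommRing R] [Nontrivial R] :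
    GTComplete R ↔
      ((∀ x : R, x * x = x) ∨ (∃ I : Ideal R, (I : Set R) = {x | IsZD x}) ∨
        EmbedsInProdDomains R) := by
  constructor
  · intro hC
    by_cases hId : ∀ x y : R, IsZD x → IsZD y → IsZD (x + y)
    · right; left
      refine ⟨{ carrier := {x : R | IsZD x},
                add_mem' := fun hx hy => hId _ _ hx hy,
                zero_mem' := ⟨1, one_ne_zero, by ring⟩,
                smul_mem' := ?_ }, rfl⟩
      rintro c z ⟨y, hy0, hzy⟩
      exact ⟨y, hy0, by rw [smul_eq_mul]; linear_combination c * hzy⟩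
    · push_neg at hId
      obtain ⟨a, b, ha, hb, hs⟩ := hId
      have ha0 : a ≠ 0 := by rintro rfl; rw [zero_add] at hs; exact hs hb
      have hb0 : b ≠ 0 := by rintro rfl; rw [add_zero] at hs; exact hs ha
      have hanb : a ≠ b := by
        rintro rfl
        obtain ⟨y, hy0, hay⟩ := ha
        exact hs ⟨y, hy0, by linear_combination 2 * hay⟩
      have hab : a * b = 0 := by
        rcases hC a b ha ha0 hb hb0 hanb with h | h
        · exact h
        · exact absurd h hs
      by_cases hPa : ∃ u v : R, u * v * a = 0 ∧ u * a ≠ 0 ∧ v * a ≠ 0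
      · obtain ⟨u, v, h1, h2, h3⟩ := hPa
        exact Or.inl (boolean_of_bad hC ha0 hb0 hab hs h1 h2 h3)
      by_cases hPb : ∃ u v : R, u * v * b = 0 ∧ u * b ≠ 0 ∧ v * b ≠ 0
      · obtain ⟨u, v, h1, h2, h3⟩ := hPb
        have hs' : ¬ IsZD (b + a) := by rwa [add_comm]
        exact Or.inl (boolean_of_bad hC hb0 ha0 (by linear_combination hab) hs' h1 h2 h3)
      · right; right
        push_neg at hPa hPb
        haveI hPaP : (annIdeal a).IsPrime := by
          constructor
          · intro h
            have h1 : (1 : R) ∈ annIdeal a := h ▸ Submodule.mem_top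
            rw [mem_annIdeal, one_mul] at h1
            exact ha0 h1
          · intro z w hzw
            rw [mem_annIdeal] at hzw
            rw [mem_annIdeal, mem_annIdeal]
            by_cases hz : z * a = 0
            · exact Or.inl hz
            · exact Or.inr (hPa z w hzw hz)
        haveI hPbP : (annIdeal b).IsPrime := by
          constructor
          · intro h
            have h1 : (1 : R) ∈ annIdeal b := h ▸ Submodule.mem_top
            rw [mem_annIdeal, one_mul] at h1
            exact hb0 h1
          · intro z w hzw
            rw [mem_annIdeal] at hzw
            rw [mem_annIdeal, mem_annIdeal]
            by_cases hz : z * b = 0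
            · exact Or.inl hz
            · exact Or.inr (hPb z w hzw hz)
        refine ⟨R ⧸ annIdeal a, R ⧸ annIdeal b, inferInstance, inferInstance,
          inferInstance, inferInstance,
          (Ideal.Quotient.mk (annIdeal a)).prod (Ideal.Quotient.mk (annIdeal b)), ?_⟩
        intro z w hzw
        rw [RingHom.prod_apply, RingHom.prod_apply, Prod.mk.injEq] at hzw
        have h1 : z - w ∈ annIdeal a := Ideal.Quotient.eq.mp hzw.1
        have h2 : z - w ∈ annIdeal b := Ideal.Quotient.eq.mp hzw.2
        rw [mem_annIdeal] at h1 h2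
        have h3 : (a + b) * (z - w) = 0 := by linear_combination h1 + h2
        have h4 := regular_mul hs h3
        exact sub_eq_zero.mp h4
  · rintro (hBool | ⟨I, hI⟩ | ⟨A, B, iA, iB, hDA, hDB, f, hf⟩)
    · intro x y hx hx0 hy hy0 hxy
      by_cases h1 : x + y - 1 = 0
      · exact Or.inl (by linear_combination x * h1 - hBool x)
      · exact Or.inr ⟨x + y - 1, h1, by linear_combination hBool (x + y)⟩
    · intro x y hx hx0 hy hy0 hxy
      have hxm : x ∈ I := by rw [← SetLike.mem_coe, hI]; exact hx
      have hym : y ∈ I := by rw [← SetLike.mem_coe, hI]; exact hy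
      have : x + y ∈ I := I.add_mem hxm hym
      rw [← SetLike.mem_coe, hI] at this
      exact Or.inr this
    · haveI := hDA; haveI := hDB
      intro x y hx hx0 hy hy0 hxy
      have hfz : ∀ z : R, z ≠ 0 → f z ≠ 0 := by
        intro z hz h
        exact hz (hf (by rw [h, map_zero]))
      have comp : ∀ z : R, IsZD z → z ≠ 0 →
          ((f z).1 = 0 ∧ ∃ w : R, w ≠ 0 ∧ z * w = 0 ∧ (f w).2 = 0) ∨
          ((f z).2 = 0 ∧ ∃ w : R, w ≠ 0 ∧ z * w = 0 ∧ (f w).1 = 0) := by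
        rintro z ⟨w, hw0, hzw⟩ hz0
        have hfzw : f z * f w = 0 := by rw [← map_mul, hzw, map_zero]
        have h1 : (f z).1 * (f w).1 = 0 := by
          rw [← Prod.fst_mul, hfzw]; rfl
        have h2 : (f z).2 * (f w).2 = 0 := by
          rw [← Prod.snd_mul, hfzw]; rfl
        have hfw : f w ≠ 0 := hfz w hw0
        rcases mul_eq_zero.mp h1 with hz1 | hw1
        · -- (f z).1 = 0; then (f z).2 ≠ 0 (else f z = 0), so (f w).2 = 0
          left
          refine ⟨hz1, w, hw0, hzw, ?_⟩
          have hz2 : (f z).2 ≠ 0 := by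
            intro h
            exact hfz z hz0 (Prod.ext hz1 h)
          rcases mul_eq_zero.mp h2 with hz2' | hw2
          · exact absurd hz2' hz2
          · exact hw2
        · rcases mul_eq_zero.mp h2 with hz2 | hw2
          · right
            refine ⟨hz2, w, hw0, hzw, hw1⟩
          · exact absurd (Prod.ext hw1 hw2) hfw
      rcases comp x hx hx0 with ⟨hx1, wx, hwx0, hxwx, hwx2⟩ | ⟨hx2, wx, hwx0, hxwx, hwx1⟩ <;>
        rcases comp y hy hy0 with ⟨hy1, wy, hwy0, hywy, hwy2⟩ | ⟨hy2, wy, hwy0, hywy, hwy1⟩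
      · -- both first components zero: x + y killed by wx
        right
        refine ⟨wx, hwx0, hf ?_⟩
        rw [map_mul, map_add, map_zero]
        exact Prod.ext (by simp [Prod.fst_mul, Prod.fst_add, hx1, hy1])
          (by simp [Prod.snd_mul, Prod.snd_add, hwx2])
      · -- x first comp zero, y second comp zero : x * y = 0
        left
        apply hf
        rw [map_mul, map_zero]
        exact Prod.ext (by simp [Prod.fst_mul, hx1]) (by simp [Prod.snd_mul, hy2])
      · left
        apply hf
        rw [map_mul, map_zero]
        exact Prod.ext (by simp [Prod.fst_mul, hy1]) (by simp [Prod.snd_mul, hx2])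
      · right
        refine ⟨wx, hwx0, hf ?_⟩
        rw [map_mul, map_add, map_zero]
        exact Prod.ext (by simp [Prod.fst_mul, Prod.fst_add, hwx1])
          (by simp [Prod.snd_mul, Prod.snd_add, hx2, hy2])
end

section
/- For a commutative ring R, the following are equivalent: (a) Z(R[x]) is an ideal of R[x]; (b) R satisfies property A and Z(R) is an ideal of R; (c) every ideal of R generated by finitely many zero-divisors has nonzero annihilator in R. -/
/-- R satisfies property A: every finitely generated ideal contained in Z(R)
has nonzero annihilator. -/
def PropertyA (R : Type) [CommRing R] : Prop :=
  ∀ I : Ideal R, I.FG → (∀ x ∈ I, IsZD x) → ∃ r : R, r ≠ 0 ∧ ∀ x ∈ I, r * x = 0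

/-- Every ideal of R generated by finitely many zero-divisors has nonzero annihilator. -/
def FinZDGenAnn (R : Type) [CommRing R] : Prop :=
  ∀ s : Finset R, (∀ x ∈ s, IsZD x) →
    ∃ r : R, r ≠ 0 ∧ ∀ x ∈ Ideal.span (s : Set R), r * x = 0

open Polynomial

/-- McCoy: a polynomial is a zero-divisor iff it is killed by a nonzero constant. -/
lemma isZD_poly_iff {R : Type} [CommRing R] [Nontrivial R] {p : R[X]} :
    IsZD p ↔ ∃ a : R, a ≠ 0 ∧ a • p = 0 := by
  constructor
  · rintro ⟨q, hq, hpq⟩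
    by_contra hcon
    push_neg at hcon
    have hmem : p ∈ nonZeroDivisors R[X] := Polynomial.mem_nonZeroDivisors_iff.mpr
      (fun a ha => by by_contra h; exact hcon a h ha)
    exact hq ((mem_nonZeroDivisors_iff.mp hmem).2 q (by rwa [mul_comm]))
  · rintro ⟨a, ha, h⟩
    refine ⟨C a, by simpa using ha, ?_⟩
    rw [mul_comm, ← smul_eq_C_mul]; exact h

lemma smul_poly_eq_zero_iff {R : Type} [CommRing R] {a : R} {p : R[X]} :
    a • p = 0 ↔ ∀ n, a * p.coeff n = 0 := by
  constructor
  · intro h n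
    have := congrArg (fun q => Polynomial.coeff q n) h
    simpa using this
  · intro h
    ext n
    simpa using h n

/-- (a) → (c) -/
lemma hAC {R : Type} [CommRing R] [Nontrivial R]
    (hA : ∃ I : Ideal (Polynomial R), (I : Set (Polynomial R)) = {p | IsZD p}) :
    FinZDGenAnn R := by
  obtain ⟨J, hJ⟩ := hA
  intro s hs
  -- list the elements of s with distinct exponents
  set l := s.toList with hl
  set p : R[X] := ∑ i ∈ Finset.range l.length, monomial i (l.getD i 0) with hp
  have hcoeff : ∀ i < l.length, p.coeff i = l.getD i 0 := by
    intro i hi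
    rw [hp, Polynomial.finset_sum_coeff]
    rw [Finset.sum_eq_single i]
    · simp
    · intro b _ hb
      simp [Polynomial.coeff_monomial, hb]
    · intro h
      exact absurd (Finset.mem_range.mpr hi) h
  have hmem : ∀ i ∈ Finset.range l.length, monomial i (l.getD i 0) ∈ J := by
    intro i hi
    rw [Finset.mem_range] at hi
    have hx : l.getD i 0 ∈ s := by
      rw [hl, ← Finset.mem_toList]
      have := List.getD_eq_getElem l 0 hi
      rw [this]
      exact List.getElem_mem hi
    obtain ⟨y, hy, hxy⟩ := hs _ hx
    have : monomial i (l.getD i 0) ∈ (J : Set R[X]) := by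
      rw [hJ]
      refine ⟨C y, by simpa using hy, ?_⟩
      rw [← Polynomial.C_mul_X_pow_eq_monomial]
      rw [mul_comm (C _) (X ^ i), mul_assoc, ← C_mul, hxy]
      simp
    exact this
  have hpJ : p ∈ J := Ideal.sum_mem J hmem
  have hpZD : IsZD p := by
    have : p ∈ (J : Set R[X]) := hpJ
    rwa [hJ] at this
  obtain ⟨a, ha, hap⟩ := isZD_poly_iff.mp hpZD
  rw [smul_poly_eq_zero_iff] at hap
  have hann : ∀ x ∈ s, a * x = 0 := by
    intro x hx
    have hx' : x ∈ l := Finset.mem_toList.mpr hx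
    obtain ⟨i, hi, rfl⟩ := List.getElem_of_mem hx'
    have := hap i
    rwa [hcoeff i hi, List.getD_eq_getElem l 0 hi] at this
  refine ⟨a, ha, ?_⟩
  intro x hx
  induction hx using Submodule.span_induction with
  | mem x hx => exact hann x hx
  | zero => simp
  | add x y _ _ hx hy => rw [mul_add, hx, hy, add_zero]
  | smul c x _ hx => rw [smul_eq_mul, mul_left_comm, hx, mul_zero]

/-- (c) → (b) -/
lemma hCB {R : Type} [CommRing R] [Nontrivial R] (hC : FinZDGenAnn R) :
    PropertyA R ∧ ∃ I : Ideal R, (I : Set R) = {x | IsZD x} := by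
  constructor
  · rintro I ⟨s, hver⟩ hZD
    obtain ⟨r, hr, hann⟩ := hC s (fun x hx => hZD x (hver ▸ Ideal.subset_span hx))
    exact ⟨r, hr, fun x hx => hann x (hver ▸ hx)⟩
  · refine ⟨{ carrier := {x : R | IsZD x},
              zero_mem' := ⟨1, one_ne_zero, by simp⟩,
              add_mem' := ?_,
              smul_mem' := ?_ }, rfl⟩
    · rintro x y hx hy
      classical
      obtain ⟨r, hr, hann⟩ := hC ({x, y} : Finset R) (by
        intro z hz
        rcases Finset.mem_insert.mp hz with rfl | hz
        · exact hx
        · rw [Finset.mem_singleton] at hz; subst hz; exact hy)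
      have hxy : x + y ∈ Ideal.span ({x, y} : Set R) := by
        exact add_mem (Ideal.subset_span (by simp)) (Ideal.subset_span (by simp))
      have := hann (x + y) (by simpa using hxy)
      exact ⟨r, hr, by rwa [mul_comm]⟩
    · rintro c x ⟨y, hy, hxy⟩
      exact ⟨y, hy, by rw [smul_eq_mul, mul_assoc, hxy, mul_zero]⟩

/-- (b) → (a) -/
lemma hBA {R : Type} [CommRing R] [Nontrivial R]
    (hB : PropertyA R ∧ ∃ I : Ideal R, (I : Set R) = {x | IsZD x}) :
    ∃ I : Ideal (Polynomial R), (I : Set (Polynomial R)) = {p | IsZD p} := by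
  obtain ⟨hPA, I, hI⟩ := hB
  have hmemI : ∀ x : R, x ∈ I ↔ IsZD x := by
    intro x
    simpa using Set.ext_iff.mp hI x
  refine ⟨{ carrier := {p : Polynomial R | IsZD p},
            zero_mem' := ⟨1, one_ne_zero, by simp⟩,
            add_mem' := ?_,
            smul_mem' := ?_ }, rfl⟩
  · rintro p q hp hq
    classical
    obtain ⟨a, ha, hap⟩ := isZD_poly_iff.mp hp
    obtain ⟨b, hb, hbq⟩ := isZD_poly_iff.mp hq
    rw [smul_poly_eq_zero_iff] at hap hbq
    -- every coefficient of p + q lies in I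
    have hcoeff : ∀ n, (p + q).coeff n ∈ I := by
      intro n
      have h1 : p.coeff n ∈ I := (hmemI _).mpr ⟨a, ha, by rw [mul_comm]; exact hap n⟩
      have h2 : q.coeff n ∈ I := (hmemI _).mpr ⟨b, hb, by rw [mul_comm]; exact hbq n⟩
      simpa using add_mem h1 h2
    set t : Finset R := (p + q).support.image (p + q).coeff with ht
    have htI : Ideal.span (t : Set R) ≤ I := by
      rw [Ideal.span_le]
      intro x hx
      simp only [ht, Finset.coe_image, Set.mem_image, Finset.mem_coe] at hx
      obtain ⟨n, _, rfl⟩ := hx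
      exact hcoeff n
    obtain ⟨r, hr, hann⟩ := hPA (Ideal.span (t : Set R)) ⟨t, rfl⟩
      (fun x hx => (hmemI x).mp (htI hx))
    refine isZD_poly_iff.mpr ⟨r, hr, smul_poly_eq_zero_iff.mpr ?_⟩
    intro n
    by_cases hn : (p + q).coeff n = 0
    · rw [hn, mul_zero]
    · refine hann _ (Ideal.subset_span ?_)
      have : (p + q).coeff n ∈ t :=
        Finset.mem_image_of_mem _ (Polynomial.mem_support_iff.mpr hn)
      exact this
  · rintro c p hp
    obtain ⟨a, ha, hap⟩ := isZD_poly_iff.mp hp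
    refine isZD_poly_iff.mpr ⟨a, ha, ?_⟩
    rw [smul_eq_mul, ← mul_smul_comm, hap, mul_zero]

theorem stmt5 (R : Type) [CommRing R] [Nontrivial R] :
    ((∃ I : Ideal (Polynomial R), (I : Set (Polynomial R)) = {p | IsZD p}) ↔
      (PropertyA R ∧ ∃ I : Ideal R, (I : Set R) = {x | IsZD x})) ∧
    ((∃ I : Ideal (Polynomial R), (I : Set (Polynomial R)) = {p | IsZD p}) ↔
      FinZDGenAnn R) := by
  constructor
  · exact ⟨fun hA => hCB (hAC hA), hBA⟩
  · exact ⟨hAC, fun hC => hBA (hCB hC)⟩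
end

section
/- Γ̃(R[x]) is complete if and only if R is isomorphic to a subring of a product of two integral domains, or every ideal of R generated by finitely many zero-divisors has nonzero annihilator. -/
open Polynomial

namespace StmtAux

variable {R : Type} [CommRing R]

lemma killall {t : R} {p : R[X]} : C t * p = 0 ↔ ∀ i, t * p.coeff i = 0 := by
  constructor
  · intro h i
    have := congrArg (fun q => Polynomial.coeff q i) h
    simpa [coeff_C_mul] using this
  · intro h
    ext i
    simp [coeff_C_mul, h i]

lemma mccoy {p : R[X]} (h : IsZD p) : ∃ t : R, t ≠ 0 ∧ C t * p = 0 := by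
  obtain ⟨q, hq0, hpq⟩ := h
  have hnm : p ∉ nonZeroDivisors R[X] := fun hmem => hq0 (mem_nonZeroDivisors_iff_right.mp hmem q (by rw [mul_comm]; exact hpq))
  obtain ⟨a, ha, hsm⟩ := Polynomial.notMem_nonZeroDivisors_iff.mp hnm
  exact ⟨a, ha, by rw [← smul_eq_C_mul]; exact hsm⟩

lemma mulX_eq_zero {p : R[X]} (h : p * X = 0) : p = 0 := by
  ext n
  have := congrArg (fun q => Polynomial.coeff q (n + 1)) h
  simpa [coeff_mul_X] using this

lemma mulXpow_eq_zero {p : R[X]} {k : ℕ} (h : p * X ^ k = 0) : p = 0 := by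
  ext n
  have := congrArg (fun q => Polynomial.coeff q (n + k)) h
  simpa [coeff_mul_X_pow] using this

lemma Cadd_eq_zero {a : R} {q : R[X]} (h : C a + q * X = 0) : a = 0 ∧ q = 0 := by
  have h0 : a = 0 := by
    have := congrArg (fun p => Polynomial.coeff p 0) h
    simpa [coeff_mul_X_pow' q 1 0] using this
  refine ⟨h0, ?_⟩
  rw [h0, map_zero, zero_add] at h
  exact mulX_eq_zero h

lemma CC_eq_zero {t s : R} : C t * C s = 0 ↔ t * s = 0 := by
  rw [← map_mul, C_eq_zero]

lemma coeff_gadget (w : R) (q : R[X]) (k i : ℕ) :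
    (C w + q * X ^ k).coeff i
      = (if i = 0 then w else 0) + (if k ≤ i then q.coeff (i - k) else 0) := by
  rw [coeff_add, coeff_C, coeff_mul_X_pow']

/-- The polynomial `l₀ + l₁ X + ⋯` attached to a list. -/
noncomputable def polL : List R → R[X]
  | [] => 0
  | x :: xs => C x + (polL xs) * X

lemma killall_polL {t : R} : ∀ l : List R, (C t * polL l = 0 ↔ ∀ x ∈ l, t * x = 0)
  | [] => by simp [polL]
  | a :: l => by
    simp only [polL, List.mem_cons]
    constructor
    · intro h
      have h' : C (t * a) + (C t * polL l) * X = 0 := by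
        rw [← h]; push_cast [map_mul]; ring
      obtain ⟨h1, h2⟩ := Cadd_eq_zero h'
      intro x hx
      rcases hx with rfl | hx
      · exact h1
      · exact (killall_polL l).mp h2 x hx
    · intro h
      have h1 : t * a = 0 := h a (Or.inl rfl)
      have h2 : C t * polL l = 0 := (killall_polL l).mpr fun x hx => h x (Or.inr hx)
      rw [mul_add, ← mul_assoc, ← map_mul, h1, map_zero, zero_add, h2, zero_mul]

variable [Nontrivial R]

/-- From a list of zero-divisors, either there is a common nonzero annihilator,
or we can extract the data `(a, G)` used to build the two prime ideals. -/
lemma extract : ∀ l : List R, (∀ x ∈ l, IsZD x) →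
    (∃ r : R, r ≠ 0 ∧ ∀ x ∈ l, r * x = 0) ∨
    (∃ (a : R) (G : R[X]), a ≠ 0 ∧ G ≠ 0 ∧ (∃ c, c ≠ 0 ∧ c * a = 0) ∧
      (∃ d, d ≠ 0 ∧ C d * G = 0) ∧ (∀ t : R, t * a = 0 → C t * G = 0 → t = 0))
  | [] => fun _ => Or.inl ⟨1, one_ne_zero, by simp⟩
  | a :: l => fun hzd => by
    rcases extract l (fun x hx => hzd x (List.mem_cons_of_mem _ hx)) with ⟨r, hr, hrl⟩ | hb
    · by_cases hall : ∃ r' : R, r' ≠ 0 ∧ ∀ x ∈ a :: l, r' * x = 0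
      · exact Or.inl hall
      · right
        have hcom : ∀ t : R, t * a = 0 → C t * polL l = 0 → t = 0 := by
          intro t h1 h2
          by_contra ht
          exact hall ⟨t, ht, by
            intro x hx
            rcases List.mem_cons.mp hx with rfl | hx
            · exact h1
            · exact (killall_polL l).mp h2 x hx⟩
        have ha : a ≠ 0 := by
          rintro rfl
          exact hall ⟨r, hr, by
            intro x hx
            rcases List.mem_cons.mp hx with rfl | hx
            · exact mul_zero r
            · exact hrl x hx⟩
        obtain ⟨c, hc, hca⟩ := hzd a List.mem_cons_self
        have hca' : c * a = 0 := by rw [mul_comm]; exact hca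
        have hG : polL l ≠ 0 := by
          intro h0
          exact hc (hcom c hca' (by rw [h0, mul_zero]))
        exact ⟨a, polL l, ha, hG, ⟨c, hc, hca'⟩,
          ⟨r, hr, (killall_polL l).mpr hrl⟩, hcom⟩
    · exact Or.inr hb

/-- Key consequence of completeness of `Γ̃(R[x])`: if `F`,`G` have no common
annihilator in `R` but both are annihilated, then the annihilator (in `R`) of `F`
contains no zero-divisor pair. -/
lemma key (hC : GTComplete R[X]) {F G : R[X]} (hF : F ≠ 0) (hG : G ≠ 0)
    (hd : ∃ d : R, d ≠ 0 ∧ C d * G = 0)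
    (hcom : ∀ t : R, C t * F = 0 → C t * G = 0 → t = 0)
    (hFG : ∀ i j, F.coeff i * G.coeff j = 0)
    {u v : R} (hu : u ≠ 0) (hv : v ≠ 0) (huF : C u * F = 0) (hvF : C v * F = 0) :
    u * v ≠ 0 := by
  intro huv
  obtain ⟨d, hd0, hdG⟩ := hd
  have hGX : G * X ≠ 0 := fun h => hG (mulX_eq_zero h)
  have hGXzd : IsZD (G * X) := ⟨C d, fun h => hd0 (by simpa using h), by
    have : G * X * C d = C d * G * X := by ring
    rw [this, hdG, zero_mul]⟩
  -- Step 1 : find e killing both u and G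
  have step1 : ∃ e : R, e ≠ 0 ∧ e * u = 0 ∧ C e * G = 0 := by
    have hCu : (C u : R[X]) ≠ 0 := by simpa using hu
    have hCuzd : IsZD (C u) := ⟨C v, by simpa using hv, by rw [← map_mul, huv, map_zero]⟩
    have hne : (C u : R[X]) ≠ G * X := by
      intro h
      have h0 := congrArg (fun p => Polynomial.coeff p 0) h
      simp [coeff_mul_X_pow' G 1 0] at h0
      exact hu h0
    rcases hC (C u) (G * X) hCuzd hCu hGXzd hGX hne with h | h
    · exfalso
      rw [← mul_assoc] at h
      exact hu (hcom u huF (mulX_eq_zero h))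
    · obtain ⟨t, ht, htk⟩ := mccoy h
      have h' : C (t * u) + (C t * G) * X = 0 := by
        rw [← htk]; push_cast [map_mul]; ring
      obtain ⟨h1, h2⟩ := Cadd_eq_zero h'
      exact ⟨t, ht, h1, h2⟩
  obtain ⟨e, he0, heu, heG⟩ := step1
  set n : ℕ := max F.natDegree G.natDegree + 1 with hn
  have hnF : F.natDegree < n := by
    have := le_max_left F.natDegree G.natDegree; omega
  have hnG : G.natDegree < n := by
    have := le_max_right F.natDegree G.natDegree; omega
  have hn1 : 1 ≤ n := by omega
  set P1 : R[X] := C u + G * X ^ (2*n) with hP1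
  set P2 : R[X] := C v + F * X ^ n with hP2
  have hc1 : ∀ i, P1.coeff i
      = (if i = 0 then u else 0) + (if 2*n ≤ i then G.coeff (i - 2*n) else 0) :=
    fun i => coeff_gadget u G (2*n) i
  have hc2 : ∀ i, P2.coeff i
      = (if i = 0 then v else 0) + (if n ≤ i then F.coeff (i - n) else 0) :=
    fun i => coeff_gadget v F n i
  have hP1ne : P1 ≠ 0 := by
    intro h
    have h0 : P1.coeff 0 = (0:R[X]).coeff 0 := by rw [h]
    rw [hc1 0, if_pos rfl, if_neg (show ¬ 2*n ≤ 0 by omega), coeff_zero, add_zero] at h0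
    exact hu h0
  have hP2ne : P2 ≠ 0 := by
    intro h
    have h0 : P2.coeff 0 = (0:R[X]).coeff 0 := by rw [h]
    rw [hc2 0, if_pos rfl, if_neg (show ¬ n ≤ 0 by omega), coeff_zero, add_zero] at h0
    exact hv h0
  have hP1zd : IsZD P1 := by
    refine ⟨C e, by simpa using he0, ?_⟩
    have hx : P1 * C e = C (e * u) + (C e * G) * X ^ (2*n) := by
      rw [hP1]; push_cast [map_mul]; ring
    rw [hx, heu, heG, map_zero, zero_mul, add_zero]
  have hP2zd : IsZD P2 := by
    refine ⟨C u, by simpa using hu, ?_⟩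
    have hx : P2 * C u = C (u * v) + (C u * F) * X ^ n := by
      rw [hP2]; push_cast [map_mul]; ring
    rw [hx, huv, huF, map_zero, zero_mul, add_zero]
  have hP12 : P1 ≠ P2 := by
    intro h
    have hj : F.coeff F.natDegree ≠ 0 := by
      rw [coeff_natDegree]; exact leadingCoeff_ne_zero.mpr hF
    have h1 : P1.coeff (n + F.natDegree) = 0 := by
      rw [hc1 _, if_neg (show ¬ n + F.natDegree = 0 by omega),
        if_neg (show ¬ 2*n ≤ n + F.natDegree by omega), add_zero]
    have h2 : P2.coeff (n + F.natDegree) = F.coeff F.natDegree := by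
      rw [hc2 _, if_neg (show ¬ n + F.natDegree = 0 by omega),
        if_pos (show n ≤ n + F.natDegree by omega), Nat.add_sub_cancel_left, zero_add]
    rw [h, h2] at h1
    exact hj h1
  rcases hC P1 P2 hP1zd hP1ne hP2zd hP2ne hP12 with h | h
  · -- product zero : conclude C v * G = 0, contradiction via hcom
    have hFG0 : F * G = 0 := by
      ext k
      rw [coeff_mul, coeff_zero]
      exact Finset.sum_eq_zero fun p _ => hFG p.1 p.2
    have hexp : P1 * P2 = (C v * G) * X ^ (2*n) := by
      have hx : P1 * P2 = C u * C v + (C u * F) * X ^ n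
          + (C v * G) * X ^ (2*n) + (F * G) * (X ^ (2*n) * X ^ n) := by
        rw [hP1, hP2]; ring
      rw [hx, huF, hFG0, ← map_mul, huv, map_zero]; ring
    rw [hexp] at h
    exact hv (hcom v hvF (mulXpow_eq_zero h))
  · -- sum is a ZD : common annihilator t of F and G, contradiction
    obtain ⟨t, ht, htk⟩ := mccoy h
    have hsum : P1 + P2 = C (u + v) + F * X ^ n + G * X ^ (2*n) := by
      rw [hP1, hP2]; push_cast [map_add]; ring
    rw [hsum] at htk
    have hco : ∀ i, t * ((C (u+v) + F * X ^ n + G * X ^ (2*n)).coeff i) = 0 :=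
      killall.mp htk
    have hcoeff : ∀ i, (C (u+v) + F * X ^ n + G * X ^ (2*n)).coeff i
        = (if i = 0 then u + v else 0) + (if n ≤ i then F.coeff (i - n) else 0)
          + (if 2*n ≤ i then G.coeff (i - 2*n) else 0) := by
      intro i
      rw [coeff_add, coeff_add, coeff_C, coeff_mul_X_pow', coeff_mul_X_pow']
    have htF : C t * F = 0 := by
      rw [killall]
      intro j
      by_cases hj : j ≤ F.natDegree
      · have := hco (n + j)
        rw [hcoeff (n + j), if_neg (show ¬ n + j = 0 by omega),
          if_pos (show n ≤ n + j by omega), if_neg (show ¬ 2*n ≤ n + j by omega),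
          Nat.add_sub_cancel_left] at this
        simpa using this
      · rw [coeff_eq_zero_of_natDegree_lt (by omega), mul_zero]
    have htG : C t * G = 0 := by
      rw [killall]
      intro j
      by_cases hj : j ≤ G.natDegree
      · have := hco (2*n + j)
        rw [hcoeff (2*n + j), if_neg (show ¬ 2*n + j = 0 by omega),
          if_pos (show n ≤ 2*n + j by omega), if_pos (show 2*n ≤ 2*n + j by omega),
          coeff_eq_zero_of_natDegree_lt (show F.natDegree < 2*n + j - n by omega),
          Nat.add_sub_cancel_left] at this
        simpa using this
      · rw [coeff_eq_zero_of_natDegree_lt (by omega), mul_zero]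
    exact ht (hcom t htF htG)

/-- Main construction for the hard direction. -/
lemma core (hC : GTComplete R[X]) {a : R} {G : R[X]} (ha : a ≠ 0) (hG : G ≠ 0)
    (hc : ∃ c : R, c ≠ 0 ∧ c * a = 0) (hd : ∃ d : R, d ≠ 0 ∧ C d * G = 0)
    (hcom : ∀ t : R, t * a = 0 → C t * G = 0 → t = 0) : EmbedsInProdDomains R := by
  obtain ⟨c, hc0, hca⟩ := hc
  obtain ⟨d, hd0, hdG⟩ := hd
  -- Step: a kills G coefficientwise
  have haG : C a * G = 0 := by
    have hCa : (C a : R[X]) ≠ 0 := by simpa using ha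
    have hCazd : IsZD (C a) := ⟨C c, by simpa using hc0, by rw [CC_eq_zero, mul_comm]; exact hca⟩
    have hGX : G * X ≠ 0 := fun h => hG (mulX_eq_zero h)
    have hGXzd : IsZD (G * X) := ⟨C d, by simpa using hd0, by
      have : G * X * C d = C d * G * X := by ring
      rw [this, hdG, zero_mul]⟩
    have hne : (C a : R[X]) ≠ G * X := by
      intro h
      have h0 := congrArg (fun p => Polynomial.coeff p 0) h
      simp [coeff_mul_X_pow' G 1 0] at h0
      exact ha h0
    rcases hC (C a) (G * X) hCazd hCa hGXzd hGX hne with h | h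
    · rw [← mul_assoc] at h
      exact mulX_eq_zero h
    · exfalso
      obtain ⟨t, ht, htk⟩ := mccoy h
      have h' : C (t * a) + (C t * G) * X = 0 := by
        rw [← htk]; push_cast [map_mul]; ring
      obtain ⟨h1, h2⟩ := Cadd_eq_zero h'
      exact ht (hcom t h1 h2)
  have haGc : ∀ j, a * G.coeff j = 0 := killall.mp haG
  -- two key instances
  have keyA : ∀ u v : R, u ≠ 0 → v ≠ 0 → u * a = 0 → v * a = 0 → u * v ≠ 0 := by
    intro u v hu hv hua hva
    refine key hC (F := C a) (G := G) (by simpa using ha) hG ⟨d, hd0, hdG⟩ ?_ ?_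
      hu hv (by rw [CC_eq_zero]; exact hua) (by rw [CC_eq_zero]; exact hva)
    · intro t h1 h2
      exact hcom t (CC_eq_zero.mp h1) h2
    · intro i j
      rcases Nat.eq_zero_or_pos i with rfl | hi
      · rw [coeff_C_zero]; exact haGc j
      · rw [coeff_C, if_neg (by omega), zero_mul]
  have keyB : ∀ u v : R, u ≠ 0 → v ≠ 0 → C u * G = 0 → C v * G = 0 → u * v ≠ 0 := by
    intro u v hu hv huG hvG
    refine key hC (F := G) (G := C a) hG (by simpa using ha)
      ⟨c, hc0, by rw [CC_eq_zero]; exact hca⟩ ?_ ?_ hu hv huG hvG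
    · intro t h1 h2
      exact hcom t (CC_eq_zero.mp h2) h1
    · intro i j
      rcases Nat.eq_zero_or_pos j with rfl | hj
      · rw [coeff_C_zero, mul_comm]; exact haGc i
      · rw [coeff_C, if_neg (by omega), mul_zero]
  -- the two prime ideals
  let P : Ideal R :=
    { carrier := {r | ∀ z : R, z * a = 0 → r * z = 0}
      add_mem' := fun h1 h2 z hz => by
        rw [add_mul, h1 z hz, h2 z hz, add_zero]
      zero_mem' := fun z _ => zero_mul z
      smul_mem' := fun m r hr z hz => by
        simp only [smul_eq_mul, mul_assoc]
        rw [hr z hz, mul_zero] }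
  let Q : Ideal R :=
    { carrier := {r | ∀ z : R, C z * G = 0 → r * z = 0}
      add_mem' := fun h1 h2 z hz => by
        rw [add_mul, h1 z hz, h2 z hz, add_zero]
      zero_mem' := fun z _ => zero_mul z
      smul_mem' := fun m r hr z hz => by
        simp only [smul_eq_mul, mul_assoc]
        rw [hr z hz, mul_zero] }
  have hPmem : ∀ r : R, r ∈ P ↔ ∀ z : R, z * a = 0 → r * z = 0 := fun r => Iff.rfl
  have hQmem : ∀ r : R, r ∈ Q ↔ ∀ z : R, C z * G = 0 → r * z = 0 := fun r => Iff.rfl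
  have hP : P.IsPrime := by
    constructor
    · intro h
      have h1 : (1:R) ∈ P := h ▸ Submodule.mem_top
      exact hc0 (by simpa using (hPmem 1).mp h1 c hca)
    · intro x y hxy
      by_contra hcon
      push_neg at hcon
      obtain ⟨hx, hy⟩ := hcon
      simp only [hPmem, not_forall] at hx hy
      obtain ⟨z1, hz1, hxz1⟩ := hx
      obtain ⟨z2, hz2, hyz2⟩ := hy
      have h12 : (x * z1) * (y * z2) = 0 := by
        have hza : (z1 * z2) * a = 0 := by rw [mul_assoc, hz2, mul_zero]
        have h0 := (hPmem _).mp hxy (z1 * z2) hza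
        calc (x * z1) * (y * z2) = (x * y) * (z1 * z2) := by ring
        _ = 0 := h0
      exact keyA (x * z1) (y * z2) hxz1 hyz2
        (by rw [mul_assoc, hz1, mul_zero]) (by rw [mul_assoc, hz2, mul_zero]) h12
  have hQ : Q.IsPrime := by
    constructor
    · intro h
      have h1 : (1:R) ∈ Q := h ▸ Submodule.mem_top
      exact hd0 (by simpa using (hQmem 1).mp h1 d hdG)
    · intro x y hxy
      by_contra hcon
      push_neg at hcon
      obtain ⟨hx, hy⟩ := hcon
      simp only [hQmem, not_forall] at hx hy
      obtain ⟨z1, hz1, hxz1⟩ := hx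
      obtain ⟨z2, hz2, hyz2⟩ := hy
      have h12 : (x * z1) * (y * z2) = 0 := by
        have hzG : C (z1 * z2) * G = 0 := by
          rw [map_mul, mul_assoc, hz2, mul_zero]
        have h0 := (hQmem _).mp hxy (z1 * z2) hzG
        calc (x * z1) * (y * z2) = (x * y) * (z1 * z2) := by ring
        _ = 0 := h0
      exact keyB (x * z1) (y * z2) hxz1 hyz2
        (by rw [map_mul, mul_assoc, hz1, mul_zero]) (by rw [map_mul, mul_assoc, hz2, mul_zero]) h12
  -- build the embedding
  haveI := hP
  haveI := hQ
  refine ⟨R ⧸ P, R ⧸ Q, inferInstance, inferInstance, inferInstance, inferInstance,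
    (Ideal.Quotient.mk P).prod (Ideal.Quotient.mk Q), ?_⟩
  rw [injective_iff_map_eq_zero]
  intro r hr
  have hrP : r ∈ P := by
    rw [← Ideal.Quotient.eq_zero_iff_mem]
    exact congrArg Prod.fst hr
  have hrQ : r ∈ Q := by
    rw [← Ideal.Quotient.eq_zero_iff_mem]
    exact congrArg Prod.snd hr
  have hra : r * a = 0 := (hQmem r).mp hrQ a haG
  have hrG : C r * G = 0 := by
    rw [killall]
    intro j
    exact (hPmem r).mp hrP (G.coeff j) (by rw [mul_comm]; exact haGc j)
  exact hcom r hra hrG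

/-- The easy direction from `FinZDGenAnn`. -/
lemma finzd_imp (h : FinZDGenAnn R) : GTComplete R[X] := by
  intro f g hf _ hg _ _
  right
  obtain ⟨c, hc, hcf⟩ := mccoy hf
  obtain ⟨d, hd, hdg⟩ := mccoy hg
  classical
  set s : Finset R := f.support.image f.coeff ∪ g.support.image g.coeff with hs
  have hszd : ∀ x ∈ s, IsZD x := by
    intro x hx
    rcases Finset.mem_union.mp hx with hx | hx
    · obtain ⟨i, _, rfl⟩ := Finset.mem_image.mp hx
      exact ⟨c, hc, by rw [mul_comm]; exact killall.mp hcf i⟩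
    · obtain ⟨i, _, rfl⟩ := Finset.mem_image.mp hx
      exact ⟨d, hd, by rw [mul_comm]; exact killall.mp hdg i⟩
  obtain ⟨r, hr, hrann⟩ := h s hszd
  have hmem : ∀ (p : R[X]), p.support.image p.coeff ⊆ s →
      ∀ i, p.coeff i ∈ Ideal.span (s : Set R) := by
    intro p hsub i
    by_cases hi : i ∈ p.support
    · exact Ideal.subset_span (by exact_mod_cast hsub (Finset.mem_image.mpr ⟨i, hi, rfl⟩))
    · rw [Polynomial.notMem_support_iff.mp hi]; exact zero_mem _
  refine ⟨C r, by simpa using hr, ?_⟩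
  have hin : ∀ i, (f + g).coeff i ∈ Ideal.span (s : Set R) := by
    intro i
    rw [coeff_add]
    exact add_mem (hmem f Finset.subset_union_left i) (hmem g Finset.subset_union_right i)
  ext i
  rw [coeff_mul_C, coeff_zero, mul_comm]
  exact hrann _ (hin i)

/-- The easy direction from `EmbedsInProdDomains`. -/
lemma embeds_imp (h : EmbedsInProdDomains R) : GTComplete R[X] := by
  obtain ⟨A, B, iA, iB, hA, hB, φ, hφ⟩ := h
  haveI := hA; haveI := hB
  let f1 : R[X] →+* A[X] := mapRingHom ((RingHom.fst A B).comp φ)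
  let f2 : R[X] →+* B[X] := mapRingHom ((RingHom.snd A B).comp φ)
  have hinj : ∀ p : R[X], f1 p = 0 → f2 p = 0 → p = 0 := by
    intro p h1 h2
    ext i
    have e1 : (φ (p.coeff i)).1 = 0 := by
      have := congrArg (fun q => q.coeff i) h1; simpa [f1, coeff_map] using this
    have e2 : (φ (p.coeff i)).2 = 0 := by
      have := congrArg (fun q => q.coeff i) h2; simpa [f2, coeff_map] using this
    have : φ (p.coeff i) = φ 0 := by
      rw [map_zero]; exact Prod.ext e1 e2
    simpa using hφ this
  have classify : ∀ u : R[X], IsZD u → u ≠ 0 →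
      (f2 u = 0 ∧ ∃ w, w ≠ 0 ∧ f1 w = 0 ∧ u * w = 0) ∨
      (f1 u = 0 ∧ ∃ w, w ≠ 0 ∧ f2 w = 0 ∧ u * w = 0) := by
    rintro u ⟨w, hw0, huw⟩ hu0
    have h1 : f1 u * f1 w = 0 := by rw [← map_mul, huw, map_zero]
    have h2 : f2 u * f2 w = 0 := by rw [← map_mul, huw, map_zero]
    by_cases hu1 : f1 u = 0
    · right
      have hu2 : f2 u ≠ 0 := fun h => hu0 (hinj u hu1 h)
      have hw2 : f2 w = 0 := (mul_eq_zero.mp h2).resolve_left hu2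
      exact ⟨hu1, w, hw0, hw2, huw⟩
    · left
      have hw1 : f1 w = 0 := (mul_eq_zero.mp h1).resolve_left hu1
      have hw2 : f2 w ≠ 0 := fun h => hw0 (hinj w hw1 h)
      have hu2 : f2 u = 0 := (mul_eq_zero.mp h2).resolve_right hw2
      exact ⟨hu2, w, hw0, hw1, huw⟩
  intro x y hx hx0 hy hy0 hxy
  rcases classify x hx hx0 with ⟨hx2, w, hw0, hw1, hxw⟩ | ⟨hx1, w, hw0, hw2, hxw⟩ <;>
    rcases classify y hy hy0 with ⟨hy2, w', hw'0, hw'1, hyw'⟩ | ⟨hy1, w', hw'0, hw'2, hyw'⟩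
  · exact Or.inr ⟨w, hw0, hinj _ (by rw [map_mul, hw1, mul_zero])
      (by rw [map_mul, map_add, hx2, hy2, zero_add, zero_mul])⟩
  · exact Or.inl (hinj _ (by rw [map_mul, hy1, mul_zero])
      (by rw [map_mul, hx2, zero_mul]))
  · exact Or.inl (hinj _ (by rw [map_mul, hx1, zero_mul])
      (by rw [map_mul, hy2, mul_zero]))
  · exact Or.inr ⟨w, hw0, hinj _ (by rw [map_mul, map_add, hx1, hy1, zero_add, zero_mul])
      (by rw [map_mul, hw2, mul_zero])⟩

end StmtAux

theorem stmt6 (R : Type) [CommRing R] [Nontrivial R] :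
    GTComplete (Polynomial R) ↔ (EmbedsInProdDomains R ∨ FinZDGenAnn R) := by
  constructor
  · intro hC
    by_cases hFin : FinZDGenAnn R
    · exact Or.inr hFin
    · left
      rw [FinZDGenAnn] at hFin
      push_neg at hFin
      obtain ⟨s, hszd, hno⟩ := hFin
      rcases StmtAux.extract s.toList
          (fun x hx => hszd x (by simpa using hx)) with ⟨r, hr, hrl⟩ | hb
      · exfalso
        obtain ⟨x, hx, hrx⟩ := hno r hr
        refine hrx ?_
        refine Submodule.span_induction (p := fun x _ => r * x = 0) ?_ (mul_zero r) ?_ ?_ hx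
        · intro z hz
          exact hrl z (by simpa using hz)
        · intro z w _ _ h1 h2
          rw [mul_add, h1, h2, add_zero]
        · intro z w _ h1
          rw [smul_eq_mul, ← mul_assoc, mul_comm r z, mul_assoc, h1, mul_zero]
      · obtain ⟨a, G, ha, hG, hc, hd, hcom⟩ := hb
        exact StmtAux.core hC ha hG hc hd hcom
  · rintro (h | h)
    · exact StmtAux.embeds_imp h
    · exact StmtAux.finzd_imp h
end

section
/- Γ̃(R[x,y]) is complete if and only if Γ̃(R[x]) is complete. -/
open Polynomial

/-- McCoy's theorem, stated with `IsZD`. -/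
lemma mccoy {S : Type} [CommRing S] {f : Polynomial S} (h : IsZD f) :
    ∃ c : S, c ≠ 0 ∧ Polynomial.C c * f = 0 := by
  obtain ⟨y, hy, hfy⟩ := h
  have hmem : f ∉ nonZeroDivisors (Polynomial S) := by
    intro hf
    exact hy (mem_nonZeroDivisors_iff_right.mp hf y (by rw [mul_comm]; exact hfy))
  obtain ⟨a, ha, haf⟩ := Polynomial.notMem_nonZeroDivisors_iff.mp hmem
  exact ⟨a, ha, by rwa [← Polynomial.smul_eq_C_mul]⟩

/-- Coefficient computation for the flattening map `y ↦ X^N`. -/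
lemma coeff_flatten {R : Type} [CommRing R] (P : Polynomial (Polynomial R)) (N j i : ℕ)
    (hN : ∀ k, (P.coeff k).natDegree < N) (hi : i < N) :
    (Polynomial.eval (Polynomial.X ^ N) P).coeff (N * j + i) = (P.coeff j).coeff i := by
  rw [Polynomial.eval_eq_sum, Polynomial.sum, Polynomial.finset_sum_coeff]
  have key : ∀ e : ℕ,
      (P.coeff e * (Polynomial.X ^ N) ^ e).coeff (N * j + i) =
        if e = j then (P.coeff j).coeff i else (0 : R) := by
    intro e
    rw [← pow_mul, Polynomial.coeff_mul_X_pow']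
    rcases lt_trichotomy e j with he | rfl | he
    · rw [if_neg (Nat.ne_of_lt he)]
      have h1 : N * e + N ≤ N * j := by
        calc N * e + N = N * (e + 1) := by ring
        _ ≤ N * j := Nat.mul_le_mul_left N he
      rw [if_pos (by omega)]
      exact Polynomial.coeff_eq_zero_of_natDegree_lt (lt_of_lt_of_le (hN e) (by omega))
    · rw [if_pos rfl, if_pos (Nat.le_add_right _ _), Nat.add_sub_cancel_left]
    · rw [if_neg (Nat.ne_of_gt he)]
      have h1 : N * j + N ≤ N * e := by
        calc N * j + N = N * (j + 1) := by ring
        _ ≤ N * e := Nat.mul_le_mul_left N he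
      rw [if_neg (by omega)]
  by_cases hj : j ∈ P.support
  · rw [Finset.sum_eq_single_of_mem j hj]
    · rw [key, if_pos rfl]
    · intro b _ hb
      rw [key, if_neg hb]
  · have hPj : P.coeff j = 0 := Polynomial.notMem_support_iff.mp hj
    rw [hPj, Polynomial.coeff_zero]
    apply Finset.sum_eq_zero
    intro b hb
    rw [key]
    split_ifs with h
    · subst h; exact absurd hb hj
    · rfl

/-- The flattening map `y ↦ X^N` is injective on polynomials whose coefficients
have degree `< N`. -/
lemma flatten_eq_zero {R : Type} [CommRing R] {P : Polynomial (Polynomial R)} {N : ℕ}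
    (hN : ∀ k, (P.coeff k).natDegree < N)
    (h : Polynomial.eval (Polynomial.X ^ N) P = 0) : P = 0 := by
  ext j i
  rw [Polynomial.coeff_zero]
  simp only [Polynomial.coeff_zero]
  by_cases hi : i < N
  · rw [← coeff_flatten P N j i hN hi, h, Polynomial.coeff_zero]
  · exact Polynomial.coeff_eq_zero_of_natDegree_lt (lt_of_lt_of_le (hN j) (le_of_not_gt hi))

/-- From completeness of Γ̃(S[x]), any two zero-divisors with nonzero product have a
common nonzero annihilating constant. -/
lemma common_ann {S : Type} [CommRing S] (hc : GTComplete (Polynomial S))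
    {f g : Polynomial S} (hf : IsZD f) (hg : IsZD g) (hfg : f * g ≠ 0) :
    ∃ c : S, c ≠ 0 ∧ Polynomial.C c * f = 0 ∧ Polynomial.C c * g = 0 := by
  have hf0 : f ≠ 0 := fun h => hfg (by rw [h, zero_mul])
  have hg0 : g ≠ 0 := fun h => hfg (by rw [h, mul_zero])
  set n := f.natDegree + 1 with hn
  have hmonic : (Polynomial.X ^ n : Polynomial S).Monic := Polynomial.monic_X_pow n
  have hg'0 : g * Polynomial.X ^ n ≠ 0 := fun h => hg0 (hmonic.mul_left_eq_zero_iff.mp h)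
  have hg' : IsZD (g * Polynomial.X ^ n) := by
    obtain ⟨y, hy, hgy⟩ := hg
    exact ⟨y, hy, by rw [mul_right_comm, hgy, zero_mul]⟩
  have hne : f ≠ g * Polynomial.X ^ n := by
    intro h
    haveI : Nontrivial S := by
      rcases subsingleton_or_nontrivial S with hS | hS
      · exact absurd (Subsingleton.elim f 0) hf0
      · exact hS
    have hd : (g * Polynomial.X ^ n).natDegree = g.natDegree + n := by
      rw [mul_comm, hmonic.natDegree_mul' hg0, Polynomial.natDegree_X_pow, add_comm]
    have := congrArg Polynomial.natDegree h
    rw [hd] at this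
    omega
  have hprod : f * (g * Polynomial.X ^ n) ≠ 0 := by
    intro h
    rw [← mul_assoc] at h
    exact hfg (hmonic.mul_left_eq_zero_iff.mp h)
  rcases hc f (g * Polynomial.X ^ n) hf hf0 hg' hg'0 hne with h | h
  · exact absurd h hprod
  · obtain ⟨c, hc0, hcf⟩ := mccoy h
    refine ⟨c, hc0, ?_⟩
    rw [mul_add, ← mul_assoc] at hcf
    set u := Polynomial.C c * f with hu
    set v := Polynomial.C c * g with hv
    have hveq : v = 0 := by
      by_contra hv0
      have h1 : u.coeff (v.natDegree + n) + v.leadingCoeff = 0 := by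
        have := congrArg (fun p => Polynomial.coeff p (v.natDegree + n)) hcf
        simpa [Polynomial.coeff_add, Polynomial.coeff_mul_X_pow] using this
      have h2 : u.coeff (v.natDegree + n) = 0 := by
        apply Polynomial.coeff_eq_zero_of_natDegree_lt
        have : u.natDegree ≤ f.natDegree := Polynomial.natDegree_C_mul_le c f
        omega
      rw [h2, zero_add] at h1
      exact hv0 (Polynomial.leadingCoeff_eq_zero.mp h1)
    have hueq : u = 0 := by rwa [hveq, zero_mul, add_zero] at hcf
    exact ⟨hueq, hveq⟩

/-- Bound on the degrees of coefficients of a bivariate polynomial. -/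
lemma exists_coeff_bound {R : Type} [CommRing R] (P : Polynomial (Polynomial R)) :
    ∃ M : ℕ, ∀ k, (P.coeff k).natDegree < M := by
  refine ⟨((Finset.range (P.natDegree + 1)).sup fun j => (P.coeff j).natDegree) + 1, fun k => ?_⟩
  by_cases hk : k ≤ P.natDegree
  · have hmem : k ∈ Finset.range (P.natDegree + 1) := Finset.mem_range.mpr (by omega)
    have : (P.coeff k).natDegree ≤
        (Finset.range (P.natDegree + 1)).sup fun j => (P.coeff j).natDegree :=
      Finset.le_sup (f := fun j => (P.coeff j).natDegree) hmem
    omega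
  · rw [Polynomial.coeff_eq_zero_of_natDegree_lt (show P.natDegree < k by omega),
      Polynomial.natDegree_zero]
    omega

theorem stmt7 (R : Type) [CommRing R] [Nontrivial R] :
    GTComplete (Polynomial (Polynomial R)) ↔ GTComplete (Polynomial R) := by
  constructor
  · -- Γ̃(R[x,y]) complete → Γ̃(R[x]) complete
    intro H f g hf hf0 hg hg0 hne
    have hCf : IsZD (Polynomial.C f : Polynomial (Polynomial R)) := by
      obtain ⟨y, hy, hfy⟩ := hf
      exact ⟨Polynomial.C y, by rwa [ne_eq, Polynomial.C_eq_zero],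
        by rw [← Polynomial.C_mul, hfy, Polynomial.C_0]⟩
    have hCg : IsZD (Polynomial.C g : Polynomial (Polynomial R)) := by
      obtain ⟨y, hy, hgy⟩ := hg
      exact ⟨Polynomial.C y, by rwa [ne_eq, Polynomial.C_eq_zero],
        by rw [← Polynomial.C_mul, hgy, Polynomial.C_0]⟩
    rcases H (Polynomial.C f) (Polynomial.C g)
        hCf (by rwa [ne_eq, Polynomial.C_eq_zero])
        hCg (by rwa [ne_eq, Polynomial.C_eq_zero])
        (by rwa [ne_eq, Polynomial.C_inj]) with h | h
    · left
      rw [← Polynomial.C_mul, Polynomial.C_eq_zero] at h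
      exact h
    · right
      rw [← Polynomial.C_add] at h
      obtain ⟨k, hk0, hkC⟩ := mccoy h
      rw [← Polynomial.C_mul, Polynomial.C_eq_zero] at hkC
      exact ⟨k, hk0, by rw [mul_comm]; exact hkC⟩
  · -- Γ̃(R[x]) complete → Γ̃(R[x,y]) complete
    intro H F G hF hF0 hG hG0 hne
    by_cases hFG : F * G = 0
    · exact Or.inl hFG
    right
    obtain ⟨M₁, hM₁⟩ := exists_coeff_bound F
    obtain ⟨M₂, hM₂⟩ := exists_coeff_bound G
    obtain ⟨M₃, hM₃⟩ := exists_coeff_bound (F * G)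
    set N := M₁ + M₂ + M₃ with hN
    have hNF : ∀ k, (F.coeff k).natDegree < N := fun k => by have := hM₁ k; omega
    have hNG : ∀ k, (G.coeff k).natDegree < N := fun k => by have := hM₂ k; omega
    have hNFG : ∀ k, ((F * G).coeff k).natDegree < N := fun k => by have := hM₃ k; omega
    set φ : Polynomial (Polynomial R) → Polynomial R :=
      fun P => Polynomial.eval (Polynomial.X ^ N) P with hφ
    -- f and g are zero divisors
    obtain ⟨h₁, hh₁0, hh₁⟩ := mccoy hF
    obtain ⟨h₂, hh₂0, hh₂⟩ := mccoy hG
    have hfZD : IsZD (φ F) := by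
      refine ⟨h₁, hh₁0, ?_⟩
      have : φ (Polynomial.C h₁ * F) = 0 := by rw [hh₁]; simp [hφ]
      rw [hφ] at this ⊢
      simpa [mul_comm] using this
    have hgZD : IsZD (φ G) := by
      refine ⟨h₂, hh₂0, ?_⟩
      have : φ (Polynomial.C h₂ * G) = 0 := by rw [hh₂]; simp [hφ]
      rw [hφ] at this ⊢
      simpa [mul_comm] using this
    have hfg : φ F * φ G ≠ 0 := by
      intro h
      apply hFG
      apply flatten_eq_zero hNFG
      rw [Polynomial.eval_mul] at *
      exact h
    obtain ⟨c, hc0, hcf, hcg⟩ := common_ann H hfZD hgZD hfg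
    have hkillF : Polynomial.C (Polynomial.C c) * F = 0 := by
      apply flatten_eq_zero (N := N)
      · intro k
        rw [Polynomial.coeff_C_mul]
        exact lt_of_le_of_lt (Polynomial.natDegree_C_mul_le c (F.coeff k)) (hNF k)
      · rw [Polynomial.eval_mul, Polynomial.eval_C]
        exact hcf
    have hkillG : Polynomial.C (Polynomial.C c) * G = 0 := by
      apply flatten_eq_zero (N := N)
      · intro k
        rw [Polynomial.coeff_C_mul]
        exact lt_of_le_of_lt (Polynomial.natDegree_C_mul_le c (G.coeff k)) (hNG k)
      · rw [Polynomial.eval_mul, Polynomial.eval_C]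
        exact hcg
    refine ⟨Polynomial.C (Polynomial.C c), ?_, ?_⟩
    · simp [Polynomial.C_eq_zero, hc0]
    · rw [mul_comm, mul_add, hkillF, hkillG, add_zero]
end

section
/- Let R be a decomposable commutative ring (isomorphic to a product of two nonzero rings). If Γ̃(R) = Γ(R), then R ≅ ℤ₂ × ℤ₂. -/
/-- Auxiliary: R is isomorphic to A × B with A, B nonzero rings. -/
def DecomposesAsAux (R A B : Type) [CommRing R] [CommRing A] [CommRing B] : Prop :=
  Nontrivial A ∧ Nontrivial B ∧ Nonempty (R ≃+* A × B)

/-- R is decomposable: isomorphic to a direct product of two nonzero rings. -/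
def IsDecomposableRing (R : Type) [iR : CommRing R] : Prop :=
  ∃ (A B : Type) (iA : CommRing A) (iB : CommRing B), @DecomposesAsAux R A B iR iA iB

/-- Γ̃(R) = Γ(R): distinct nonzero zero-divisors are adjacent in Γ̃(R) iff
they are adjacent in the zero-divisor graph Γ(R). -/
def TildeEqGamma (R : Type) [CommRing R] : Prop :=
  ∀ x y : R, IsZD x → x ≠ 0 → IsZD y → y ≠ 0 → x ≠ y →
    ((x * y = 0 ∨ IsZD (x + y)) ↔ x * y = 0)

/-- Γ̃(R) = Z*(Γ(R)): distinct nonzero zero-divisors are adjacent in Γ̃(R) iff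
they are adjacent in the total graph restricted to Z(R)*. -/
def TildeEqZStar (R : Type) [CommRing R] : Prop :=
  ∀ x y : R, IsZD x → x ≠ 0 → IsZD y → y ≠ 0 → x ≠ y →
    ((x * y = 0 ∨ IsZD (x + y)) ↔ IsZD (x + y))

lemma isZD_map_s9 {R S : Type} [CommRing R] [CommRing S] (e : R ≃+* S) (x : R) :
    IsZD x ↔ IsZD (e x) := by
  constructor
  · rintro ⟨y, hy, hxy⟩
    refine ⟨e y, fun hh => hy (by simpa using congrArg e.symm hh), ?_⟩
    rw [← map_mul, hxy, map_zero]
  · rintro ⟨y, hy, hxy⟩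
    refine ⟨e.symm y, fun hh => hy (by simpa using congrArg e hh), ?_⟩
    apply e.injective
    rw [map_mul, e.apply_symm_apply, hxy, map_zero]

lemma tildeEq_transfer {R S : Type} [CommRing R] [CommRing S] (e : R ≃+* S)
    (h : TildeEqGamma R) : TildeEqGamma S := by
  intro x y hx hx0 hy hy0 hxy
  have hx' : IsZD (e.symm x) := (isZD_map_s9 e.symm x).mp hx
  have hy' : IsZD (e.symm y) := (isZD_map_s9 e.symm y).mp hy
  have hx0' : e.symm x ≠ 0 := fun hh => hx0 (by simpa using congrArg e hh)
  have hy0' : e.symm y ≠ 0 := fun hh => hy0 (by simpa using congrArg e hh)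
  have hxy' : e.symm x ≠ e.symm y := fun hh => hxy (by simpa using congrArg e hh)
  have key := h (e.symm x) (e.symm y) hx' hx0' hy' hy0' hxy'
  have hmul : e.symm x * e.symm y = e.symm (x * y) := (map_mul e.symm x y).symm
  have hadd : e.symm x + e.symm y = e.symm (x + y) := (map_add e.symm x y).symm
  rw [hmul, hadd] at key
  have h1 : e.symm (x * y) = 0 ↔ x * y = 0 := by
    constructor
    · intro hh; simpa using congrArg e hh
    · intro hh; rw [hh, map_zero]
  have h2 : IsZD (e.symm (x + y)) ↔ IsZD (x + y) := (isZD_map_s9 e.symm (x + y)).symm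
  rw [h1, h2] at key
  exact key

lemma allTwo {A B : Type} [CommRing A] [CommRing B] [Nontrivial A] [Nontrivial B]
    (h : TildeEqGamma (A × B)) : ∀ a : A, a = 0 ∨ a = 1 := by
  intro a
  by_contra hc
  push_neg at hc
  obtain ⟨ha0, ha1⟩ := hc
  have hzd : ∀ c : A, IsZD ((c, (0:B)) : A × B) :=
    fun c => ⟨(0, 1), by simp [Prod.ext_iff], by simp [Prod.ext_iff]⟩
  have key := (h (1, 0) (a, 0) (hzd 1) (by simp [Prod.ext_iff])
      (hzd a) (by simp [Prod.ext_iff, ha0])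
      (by simp [Prod.ext_iff]; exact fun hh => ha1 hh.symm)).mp
      (Or.inr (by simpa using hzd (1 + a)))
  simp [Prod.ext_iff] at key
  exact ha0 key

lemma twoElem {A : Type} [CommRing A] [Nontrivial A] (h : ∀ a : A, a = 0 ∨ a = 1) :
    Nonempty (A ≃+* ZMod 2) := by
  classical
  have h11 : (1 : A) + 1 = 0 := by
    rcases h (1 + 1) with hh | hh
    · exact hh
    · exfalso; exact one_ne_zero (by linear_combination hh)
  have hz : ∀ n : ZMod 2, n = 0 ∨ n = 1 := by decide
  refine ⟨{ toFun := fun a => if a = 0 then 0 else 1,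
            invFun := fun n => if n = 0 then 0 else 1,
            left_inv := ?_, right_inv := ?_, map_mul' := ?_, map_add' := ?_ }⟩
  · intro a
    rcases h a with ha | ha <;> simp [ha]
  · intro n
    rcases hz n with hn | hn <;> simp [hn]
  · intro x y
    rcases h x with hx | hx <;> rcases h y with hy | hy <;> simp [hx, hy]
  · intro x y
    rcases h x with hx | hx <;> rcases h y with hy | hy <;>
      simp [hx, hy, h11] <;> decide

theorem stmt9 (R : Type) [CommRing R] [Nontrivial R] (hdec : IsDecomposableRing R)
    (h : TildeEqGamma R) : Nonempty (R ≃+* ZMod 2 × ZMod 2) := by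
  obtain ⟨A, B, iA, iB, hA, hB, ⟨e⟩⟩ := hdec
  have hAB : TildeEqGamma (A × B) := tildeEq_transfer e h
  have h2A := allTwo hAB
  have h2B := allTwo (tildeEq_transfer (RingEquiv.prodComm : A × B ≃+* B × A) hAB)
  obtain ⟨eA⟩ := twoElem h2A
  obtain ⟨eB⟩ := twoElem h2B
  exact ⟨e.trans (RingEquiv.prodCongr eA eB)⟩
end

section
/- For a commutative ring R with 1 ≠ 0, Γ̃(R) = Γ(R) if and only if Γ(R) is a complete graph. -/
theorem stmt10 (R : Type) [CommRing R] [Nontrivial R] :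
    TildeEqGamma R ↔
      (∀ x y : R, IsZD x → x ≠ 0 → IsZD y → y ≠ 0 → x ≠ y → x * y = 0) := by
  constructor
  · intro h x y hx hx0 hy hy0 hxy
    by_contra hne
    obtain ⟨a, ha0, hxa⟩ := hx
    obtain ⟨b, hb0, hyb⟩ := hy
    have hx' : IsZD x := ⟨a, ha0, hxa⟩
    have hy' : IsZD y := ⟨b, hb0, hyb⟩
    by_cases hxny : x = -y
    · have h0 : IsZD (x + y) := ⟨1, one_ne_zero, by rw [hxny]; ring⟩
      exact hne ((h x y hx' hx0 hy' hy0 hxy).mp (Or.inr h0))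
    by_cases hex : x = x * y
    · have hxb : x * b = 0 := by rw [hex]; linear_combination x * hyb
      have h0 : IsZD (x + y) := ⟨b, hb0, by linear_combination hxb + hyb⟩
      exact hne ((h x y hx' hx0 hy' hy0 hxy).mp (Or.inr h0))
    by_cases hey : y = x * y
    · have hya : y * a = 0 := by rw [hey]; linear_combination y * hxa
      have h0 : IsZD (x + y) := ⟨a, ha0, by linear_combination hxa + hya⟩
      exact hne ((h x y hx' hx0 hy' hy0 hxy).mp (Or.inr h0))
    have hxyzd : IsZD (x * y) := ⟨a, ha0, by linear_combination y * hxa⟩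
    have hA : x * (x * y) = 0 :=
      (h x (x * y) hx' hx0 hxyzd hne hex).mp
        (Or.inr ⟨a, ha0, by linear_combination (1 + y) * hxa⟩)
    have hB : y * (x * y) = 0 :=
      (h y (x * y) hy' hy0 hxyzd hne hey).mp
        (Or.inr ⟨b, hb0, by linear_combination (1 + x) * hyb⟩)
    have hnegzd : IsZD (-y) := ⟨b, hb0, by linear_combination -hyb⟩
    have hdiff : IsZD (x + -y) := ⟨x * y, hne, by linear_combination hA - hB⟩
    have : x * (-y) = 0 :=
      (h x (-y) hx' hx0 hnegzd (neg_ne_zero.mpr hy0) hxny).mp (Or.inr hdiff)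
    exact hne (by linear_combination -this)
  · intro h x y hx hx0 hy hy0 hxy
    exact ⟨fun _ => h x y hx hx0 hy hy0 hxy, Or.inl⟩
end

section
/- For a commutative ring R with 1 ≠ 0, Γ̃(R) = Γ(R) if and only if either R ≅ ℤ₂ × ℤ₂ or xy = 0 for all x, y ∈ Z(R). -/
/-- Auxiliary lemma: a ring with an idempotent `e ≠ 0, 1` such that `eR = {0, e}`
and `(1-e)R = {0, 1-e}` is isomorphic to `ℤ₂ × ℤ₂`. -/
lemma aux_z2z2 {R : Type} [CommRing R] (e : R) (hee : e * e = e) (he0 : e ≠ 0)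
    (hf0 : (1 : R) - e ≠ 0)
    (hDe : ∀ x : R, e * x = 0 ∨ e * x = e)
    (hDf : ∀ x : R, (1 - e) * x = 0 ∨ (1 - e) * x = 1 - e) :
    Nonempty (R ≃+* ZMod 2 × ZMod 2) := by
  classical
  have h2e : e + e = 0 := by
    rcases hDe 2 with h | h
    · linear_combination h
    · exact absurd (by linear_combination h : e = 0) he0
  have h2f : (1 - e) + (1 - e) = 0 := by
    rcases hDf 2 with h | h
    · linear_combination h
    · exact absurd (by linear_combination h : (1 : R) - e = 0) hf0
  have hef : e * (1 - e) = 0 := by linear_combination -hee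
  have hfe : (1 - e) * e = 0 := by linear_combination -hee
  have hffid : (1 - e) * (1 - e) = 1 - e := by linear_combination hee
  -- generic helpers about the indicator function
  have keyadd : ∀ u : R, u ≠ 0 → u + u = 0 → (∀ x : R, u * x = 0 ∨ u * x = u) →
      ∀ x y : R, (if u * (x + y) = 0 then (0 : ZMod 2) else 1)
        = (if u * x = 0 then (0 : ZMod 2) else 1) + (if u * y = 0 then (0 : ZMod 2) else 1) := by
    intro u hu0 h2u hD x y
    rcases hD x with hx | hx <;> rcases hD y with hy | hy
    · rw [if_pos hx, if_pos hy, if_pos (by linear_combination hx + hy : u * (x + y) = 0)]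
      decide
    · rw [if_pos hx, if_neg (fun hh : u * y = 0 => hu0 (by linear_combination hh - hy)),
        if_neg (fun hh : u * (x + y) = 0 => hu0 (by linear_combination hh - hx - hy))]
      decide
    · rw [if_neg (fun hh : u * x = 0 => hu0 (by linear_combination hh - hx)), if_pos hy,
        if_neg (fun hh : u * (x + y) = 0 => hu0 (by linear_combination hh - hx - hy))]
      decide
    · rw [if_neg (fun hh : u * x = 0 => hu0 (by linear_combination hh - hx)),
        if_neg (fun hh : u * y = 0 => hu0 (by linear_combination hh - hy)),
        if_pos (by linear_combination hx + hy + h2u : u * (x + y) = 0)]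
      decide
  have keymul : ∀ u : R, u ≠ 0 → (∀ x : R, u * x = 0 ∨ u * x = u) →
      ∀ x y : R, (if u * (x * y) = 0 then (0 : ZMod 2) else 1)
        = (if u * x = 0 then (0 : ZMod 2) else 1) * (if u * y = 0 then (0 : ZMod 2) else 1) := by
    intro u hu0 hD x y
    rcases hD x with hx | hx <;> rcases hD y with hy | hy
    · rw [if_pos hx, if_pos (by linear_combination y * hx : u * (x * y) = 0), zero_mul]
    · rw [if_pos hx, if_pos (by linear_combination y * hx : u * (x * y) = 0), zero_mul]
    · rw [if_pos hy, if_pos (by linear_combination x * hy : u * (x * y) = 0), mul_zero]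
    · rw [if_neg (fun hh : u * x = 0 => hu0 (by linear_combination hh - hx)),
        if_neg (fun hh : u * y = 0 => hu0 (by linear_combination hh - hy)),
        if_neg (fun hh : u * (x * y) = 0 => hu0 (by linear_combination hh - y * hx - hy))]
      decide
  have keyinj : ∀ u : R, u ≠ 0 → (∀ x : R, u * x = 0 ∨ u * x = u) →
      ∀ x y : R, ((if u * x = 0 then (0 : ZMod 2) else 1)
        = (if u * y = 0 then (0 : ZMod 2) else 1)) → u * x = u * y := by
    intro u hu0 hD x y h
    rcases hD x with hx | hx <;> rcases hD y with hy | hy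
    · rw [hx, hy]
    · rw [if_pos hx, if_neg (fun hh : u * y = 0 => hu0 (by linear_combination hh - hy))] at h
      exact absurd h (by decide)
    · rw [if_neg (fun hh : u * x = 0 => hu0 (by linear_combination hh - hx)), if_pos hy] at h
      exact absurd h (by decide)
    · rw [hx, hy]
  refine ⟨RingEquiv.ofBijective
    ({ toFun := fun x => ((if e * x = 0 then (0 : ZMod 2) else 1),
        (if (1 - e) * x = 0 then (0 : ZMod 2) else 1))
       map_one' := by
         show ((if e * (1:R) = 0 then (0 : ZMod 2) else 1),
           (if (1 - e) * (1:R) = 0 then (0 : ZMod 2) else 1)) = 1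
         rw [mul_one, mul_one, if_neg he0, if_neg hf0]; rfl
       map_mul' := fun x y => Prod.ext (keymul e he0 hDe x y) (keymul (1 - e) hf0 hDf x y)
       map_zero' := by
         show ((if e * (0:R) = 0 then (0 : ZMod 2) else 1),
           (if (1 - e) * (0:R) = 0 then (0 : ZMod 2) else 1)) = 0
         simp
       map_add' := fun x y => Prod.ext (keyadd e he0 h2e hDe x y)
         (keyadd (1 - e) hf0 h2f hDf x y) } : R →+* ZMod 2 × ZMod 2) ⟨?_, ?_⟩⟩
  · intro x y h
    simp only [RingHom.coe_mk, MonoidHom.coe_mk, OneHom.coe_mk, Prod.mk.injEq] at h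
    have hex := keyinj e he0 hDe x y h.1
    have hfx := keyinj (1 - e) hf0 hDf x y h.2
    linear_combination hex + hfx
  · intro p
    have hp : ∀ q : ZMod 2 × ZMod 2,
        q = (0, 0) ∨ q = (0, 1) ∨ q = (1, 0) ∨ q = (1, 1) := by decide
    rcases hp p with h | h | h | h <;> subst h
    · exact ⟨0, by simp⟩
    · refine ⟨1 - e, ?_⟩
      simp only [RingHom.coe_mk, MonoidHom.coe_mk, OneHom.coe_mk]
      rw [if_pos hef, if_neg (by rw [hffid]; exact hf0)]
    · refine ⟨e, ?_⟩
      simp only [RingHom.coe_mk, MonoidHom.coe_mk, OneHom.coe_mk]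
      rw [if_neg (by rw [hee]; exact he0), if_pos hfe]
    · refine ⟨1, ?_⟩
      simp only [RingHom.coe_mk, MonoidHom.coe_mk, OneHom.coe_mk]
      rw [mul_one, mul_one, if_neg he0, if_neg hf0]

theorem stmt11 (R : Type) [CommRing R] [Nontrivial R] :
    TildeEqGamma R ↔
      (Nonempty (R ≃+* ZMod 2 × ZMod 2) ∨ ∀ x y : R, IsZD x → IsZD y → x * y = 0) := by
  constructor
  · intro h
    have H : ∀ x y : R, IsZD x → x ≠ 0 → IsZD y → y ≠ 0 → x ≠ y → IsZD (x + y) → x * y = 0 :=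
      fun x y hx hx0 hy hy0 hxy hs => (h x y hx hx0 hy hy0 hxy).mp (Or.inr hs)
    by_cases hall : ∀ x y : R, IsZD x → IsZD y → x * y = 0
    · exact Or.inr hall
    left
    push_neg at hall
    obtain ⟨a0, b0, ha0', hb0', hab0⟩ := hall
    -- Step A : there is a zero-divisor whose square is nonzero
    have hsq : ∃ a : R, IsZD a ∧ a * a ≠ 0 := by
      by_contra hA
      push_neg at hA
      have ha00 : a0 ≠ 0 := fun hh => hab0 (by rw [hh, zero_mul])
      have hb00 : b0 ≠ 0 := fun hh => hab0 (by rw [hh, mul_zero])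
      have h1 := hA a0 ha0'
      have h2 := hA b0 hb0'
      have hne : a0 ≠ b0 := fun hh => hab0 (by rw [hh]; exact h2)
      have hzd : IsZD (a0 + b0) :=
        ⟨a0 * b0, hab0, by linear_combination b0 * h1 + a0 * h2⟩
      exact hab0 (H a0 b0 ha0' ha00 hb0' hb00 hne hzd)
    obtain ⟨a, ha, ha2⟩ := hsq
    obtain ⟨c, hc0, hac⟩ := ha
    have ha0 : a ≠ 0 := fun hh => ha2 (by rw [hh, zero_mul])
    -- Step B : 2a = 0
    have h2a : a + a = 0 := by
      by_contra h2a
      have hne : a ≠ -a := fun hh => h2a (by linear_combination hh)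
      have hneg : IsZD (-a) := ⟨c, hc0, by linear_combination -hac⟩
      have hzd0 : IsZD (a + -a) := ⟨1, one_ne_zero, by rw [add_neg_cancel, zero_mul]⟩
      have := H a (-a) ⟨c, hc0, hac⟩ ha0 hneg (neg_ne_zero.mpr ha0) hne hzd0
      exact ha2 (by linear_combination -this)
    -- Step C : a is idempotent
    have hee : a * a = a := by
      by_contra hne
      have h3 : a * (a * a) = 0 :=
        H a (a * a) ⟨c, hc0, hac⟩ ha0
          ⟨c, hc0, by linear_combination a * hac⟩ ha2
          (fun hh => hne hh.symm)
          ⟨c, hc0, by linear_combination (1 + a) * hac⟩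
      have hy0 : a + a * a ≠ 0 := fun hh => hne (by linear_combination hh - h2a)
      have hyne : a ≠ a + a * a := fun hh => ha2 (by linear_combination -hh)
      have := H a (a + a * a) ⟨c, hc0, hac⟩ ha0
        ⟨c, hc0, by linear_combination (1 + a) * hac⟩ hy0 hyne
        ⟨c, hc0, by linear_combination (2 + a) * hac⟩
      exact ha2 (by linear_combination this - h3)
    -- Step D : 1 - a ≠ 0 and the two "small image" facts
    have hf0 : (1 : R) - a ≠ 0 := by
      intro hh
      have h1 : a = 1 := by linear_combination -hh
      rw [h1, one_mul] at hac
      exact hc0 hac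
    have hef : a * (1 - a) = 0 := by linear_combination -hee
    have hfe : (1 - a) * a = 0 := by linear_combination -hee
    have hffid : (1 - a) * (1 - a) = 1 - a := by linear_combination hee
    have hDe : ∀ x : R, a * x = 0 ∨ a * x = a := by
      intro x
      by_contra hx
      push_neg at hx
      obtain ⟨hx0, hxe⟩ := hx
      have := H a (a * x) ⟨1 - a, hf0, hef⟩ ha0
        ⟨1 - a, hf0, by linear_combination x * hef⟩ hx0
        (fun hh => hxe hh.symm)
        ⟨1 - a, hf0, by linear_combination (1 + x) * hef⟩
      exact hx0 (by linear_combination this - x * hee)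
    have hDf : ∀ x : R, (1 - a) * x = 0 ∨ (1 - a) * x = 1 - a := by
      intro x
      by_contra hx
      push_neg at hx
      obtain ⟨hx0, hxe⟩ := hx
      have := H (1 - a) ((1 - a) * x) ⟨a, ha0, hfe⟩ hf0
        ⟨a, ha0, by linear_combination x * hfe⟩ hx0
        (fun hh => hxe hh.symm)
        ⟨a, ha0, by linear_combination (1 + x) * hfe⟩
      exact hx0 (by linear_combination this - x * hffid)
    exact aux_z2z2 a hee ha0 hf0 hDe hDf
  · rintro (hφ | hall)
    · obtain ⟨φ⟩ := hφ
      intro x y hx hx0 hy hy0 hxy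
      have key : ∀ u v : ZMod 2 × ZMod 2, (∃ c, c ≠ 0 ∧ u * c = 0) → u ≠ 0 →
          (∃ c, c ≠ 0 ∧ v * c = 0) → v ≠ 0 → u ≠ v → u * v = 0 := by decide
      obtain ⟨c, hc, hxc⟩ := hx
      obtain ⟨d, hd, hyd⟩ := hy
      have hinj : Function.Injective φ := φ.injective
      have h1 : φ x * φ y = 0 := by
        apply key
        · exact ⟨φ c, fun hh => hc (hinj (by rw [hh, map_zero])),
            by rw [← map_mul, hxc, map_zero]⟩
        · exact fun hh => hx0 (hinj (by rw [hh, map_zero]))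
        · exact ⟨φ d, fun hh => hd (hinj (by rw [hh, map_zero])),
            by rw [← map_mul, hyd, map_zero]⟩
        · exact fun hh => hy0 (hinj (by rw [hh, map_zero]))
        · exact fun hh => hxy (hinj hh)
      have hxy0 : x * y = 0 := hinj (by rw [map_mul, h1, map_zero])
      exact ⟨fun _ => hxy0, fun hh => Or.inl hh⟩
    · intro x y hx _ hy _ _
      exact ⟨fun _ => hall x y hx hy, fun hh => Or.inl hh⟩
end

section
/- Γ̃(R) = Z*(Γ(R)) if and only if Γ̃(T(R)) = Z*(Γ(T(R))). -/
private lemma zd_mul_unit {S : Type} [CommRing S] {x u : S} (hu : IsUnit u) :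
    IsZD (x * u) ↔ IsZD x := by
  obtain ⟨u, rfl⟩ := hu
  constructor
  · rintro ⟨y, hy, h⟩
    refine ⟨↑u * y, fun h0 => hy ?_, by rw [← mul_assoc]; exact h⟩
    have := congrArg (fun z => (↑u⁻¹ : S) * z) h0
    simpa [← mul_assoc, Units.inv_mul] using this
  · rintro ⟨y, hy, h⟩
    refine ⟨↑u⁻¹ * y, fun h0 => hy ?_, ?_⟩
    · have := congrArg (fun z => (↑u : S) * z) h0
      simpa [← mul_assoc, Units.mul_inv] using this
    · rw [show x * ↑u * (↑u⁻¹ * y) = x * y * (↑u * ↑u⁻¹) by ring, Units.mul_inv,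
        mul_one, h]

private lemma zd_map {R : Type} [CommRing R] [Nontrivial R] {r : R} :
    IsZD (algebraMap R (FractionRing R) r) ↔ IsZD r := by
  have φinj : Function.Injective (algebraMap R (FractionRing R)) :=
    IsFractionRing.injective R (FractionRing R)
  constructor
  · rintro ⟨Y, hY, h⟩
    obtain ⟨⟨u, s⟩, hs⟩ := IsLocalization.surj (nonZeroDivisors R) Y
    refine ⟨u, fun h0 => hY ?_, ?_⟩
    · have hz : Y * algebraMap R (FractionRing R) ↑s = 0 := by
        rw [hs, h0, map_zero]
      exact ((IsLocalization.map_units (FractionRing R) s).mul_left_eq_zero).mp hz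
    · apply φinj
      rw [map_mul, map_zero, ← hs, ← mul_assoc, h, zero_mul]
  · rintro ⟨y, hy, h⟩
    exact ⟨algebraMap R (FractionRing R) y, fun h0 => hy (φinj (by rw [map_zero]; exact h0)),
      by rw [← map_mul, h, map_zero]⟩

theorem stmt12 (R : Type) [CommRing R] [Nontrivial R] :
    TildeEqZStar R ↔ TildeEqZStar (FractionRing R) := by
  set T := FractionRing R with hT
  have φinj : Function.Injective (algebraMap R T) := IsFractionRing.injective R T
  constructor
  · intro h X Y hX hX0 hY hY0 hXY
    refine ⟨?_, Or.inr⟩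
    rintro (hmul | hsum)
    · obtain ⟨⟨r, s⟩, hr⟩ := IsLocalization.surj (nonZeroDivisors R) X
      obtain ⟨⟨r', s'⟩, hr'⟩ := IsLocalization.surj (nonZeroDivisors R) Y
      set a : R := r * ↑s'
      set b : R := r' * ↑s
      have hu : IsUnit (algebraMap R T (↑s * ↑s')) := by
        simpa using IsLocalization.map_units T (s * s')
      have ha : algebraMap R T a = X * algebraMap R T (↑s * ↑s') := by
        rw [map_mul, map_mul, ← mul_assoc, hr]
      have hb : algebraMap R T b = Y * algebraMap R T (↑s * ↑s') := by
        rw [map_mul, map_mul, mul_comm (algebraMap R T (↑s : R)), ← mul_assoc, hr']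
      have hab : a * b = 0 := by
        apply φinj
        rw [map_mul, ha, hb, map_zero,
          show X * algebraMap R T (↑s * ↑s') * (Y * algebraMap R T (↑s * ↑s'))
            = X * Y * (algebraMap R T (↑s * ↑s') * algebraMap R T (↑s * ↑s')) by ring,
          hmul, zero_mul]
      have hZDa : IsZD a := zd_map.mp (by rw [ha]; exact (zd_mul_unit hu).mpr hX)
      have hZDb : IsZD b := zd_map.mp (by rw [hb]; exact (zd_mul_unit hu).mpr hY)
      have ha0 : a ≠ 0 := by
        intro h0
        apply hX0
        have : X * algebraMap R T (↑s * ↑s') = 0 := by rw [← ha, h0, map_zero]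
        exact hu.mul_left_eq_zero.mp this
      have hb0 : b ≠ 0 := by
        intro h0
        apply hY0
        have : Y * algebraMap R T (↑s * ↑s') = 0 := by rw [← hb, h0, map_zero]
        exact hu.mul_left_eq_zero.mp this
      have hne : a ≠ b := by
        intro h0
        apply hXY
        have : X * algebraMap R T (↑s * ↑s') = Y * algebraMap R T (↑s * ↑s') := by
          rw [← ha, ← hb, h0]
        exact hu.mul_right_cancel this
      have hsumR : IsZD (a + b) := (h a b hZDa ha0 hZDb hb0 hne).mp (Or.inl hab)
      have : IsZD ((X + Y) * algebraMap R T (↑s * ↑s')) := by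
        rw [show (X + Y) * algebraMap R T (↑s * ↑s')
            = X * algebraMap R T (↑s * ↑s') + Y * algebraMap R T (↑s * ↑s') by ring,
          ← ha, ← hb, ← map_add]
        exact zd_map.mpr hsumR
      exact (zd_mul_unit hu).mp this
    · exact hsum
  · intro h x y hx hx0 hy hy0 hxy
    refine ⟨?_, Or.inr⟩
    rintro (hmul | hsum)
    · have hmap : algebraMap R T x * algebraMap R T y = 0 := by
        rw [← map_mul, hmul, map_zero]
      have hne : algebraMap R T x ≠ algebraMap R T y := fun h0 => hxy (φinj h0)
      have hx0' : algebraMap R T x ≠ 0 := fun h0 => hx0 (φinj (by rw [map_zero]; exact h0))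
      have hy0' : algebraMap R T y ≠ 0 := fun h0 => hy0 (φinj (by rw [map_zero]; exact h0))
      have := (h _ _ (zd_map.mpr hx) hx0' (zd_map.mpr hy) hy0' hne).mp (Or.inl hmap)
      rw [← map_add] at this
      exact zd_map.mp this
    · exact hsum
end

section
/- For a commutative ring R with 1 ≠ 0, Γ̃(R) = Z*(Γ(R)) if and only if T(R) is indecomposable, equivalently, T(R) has no idempotents other than 0 and 1. -/
lemma idem_iff_decomp (S : Type) [CommRing S] [Nontrivial S] :
    IsDecomposableRing S ↔ ∃ e : S, e * e = e ∧ e ≠ 0 ∧ e ≠ 1 := by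
  constructor
  · rintro ⟨A, B, iA, iB, hA, hB, ⟨f⟩⟩
    refine ⟨f.symm (1, 0), ?_, ?_, ?_⟩
    · rw [← map_mul]; congr 1; ext <;> simp
    · intro h
      have := f.symm.injective (h.trans (map_zero f.symm).symm)
      exact one_ne_zero (congrArg Prod.fst this)
    · intro h
      have := f.symm.injective (h.trans (map_one f.symm).symm)
      exact zero_ne_one (congrArg Prod.snd this)
  · rintro ⟨e, he, he0, he1⟩
    set I : Ideal S := Ideal.span {e}
    set J : Ideal S := Ideal.span {1 - e}
    have cop : IsCoprime I J := by
      rw [Ideal.isCoprime_iff_exists]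
      exact ⟨e, Ideal.mem_span_singleton_self e, 1 - e,
        Ideal.mem_span_singleton_self _, by ring⟩
    have hinf : I ⊓ J = ⊥ := by
      rw [eq_bot_iff]
      rintro x ⟨hxI, hxJ⟩
      obtain ⟨a, ha⟩ := Ideal.mem_span_singleton'.mp hxI
      obtain ⟨b, hb⟩ := Ideal.mem_span_singleton'.mp hxJ
      have h1 : x * e = x := by rw [← ha]; linear_combination a * he
      have h2 : x * e = 0 := by rw [← hb]; linear_combination (-b) * he
      rw [Ideal.mem_bot, ← h1, h2]
    have hItop : I ≠ ⊤ := by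
      intro h
      have : IsUnit e := Ideal.span_singleton_eq_top.mp h
      exact he1 (this.mul_left_cancel (by rw [he, mul_one]))
    have hJtop : J ≠ ⊤ := by
      intro h
      have hu : IsUnit (1 - e) := Ideal.span_singleton_eq_top.mp h
      have : (1 - e) * (1 - e) = (1 - e) * 1 := by linear_combination he
      have h1 : 1 - e = 1 := hu.mul_left_cancel this
      exact he0 (by linear_combination -h1)
    have nI : Nontrivial (S ⧸ I) := Ideal.Quotient.nontrivial_iff.mpr hItop
    have nJ : Nontrivial (S ⧸ J) := Ideal.Quotient.nontrivial_iff.mpr hJtop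
    refine ⟨S ⧸ I, S ⧸ J, inferInstance, inferInstance, nI, nJ, ⟨?_⟩⟩
    exact ((RingEquiv.quotientBot S).symm.trans
      (Ideal.quotEquivOfEq hinf.symm)).trans
      (Ideal.quotientInfEquivQuotientProd I J cop)

lemma tilde_to_idem {R : Type} [CommRing R] [Nontrivial R] (h : TildeEqZStar R) :
    ∀ e : FractionRing R, e * e = e → e = 0 ∨ e = 1 := by
  intro e he
  by_contra hc
  push_neg at hc
  obtain ⟨he0, he1⟩ := hc
  obtain ⟨⟨r, s⟩, hrs⟩ := IsLocalization.surj (nonZeroDivisors R) e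
  set a := algebraMap R (FractionRing R) with ha
  obtain ⟨u, hu⟩ := IsLocalization.map_units (FractionRing R) s
  have heq : e = a r * ↑u⁻¹ := by
    rw [Units.eq_mul_inv_iff_mul_eq, hu]; exact hrs
  have har : a r = e * ↑u := by rw [heq, mul_assoc, u.inv_mul, mul_one]
  have key : a (r * r) = a (r * s) := by
    rw [map_mul, map_mul, har, ha, ← hu]
    linear_combination (↑u * ↑u : FractionRing R) * he
  have hr : r * r = r * (s : R) := IsFractionRing.injective R (FractionRing R) key
  have hx0 : r ≠ 0 := by
    rintro rfl
    exact he0 (by rw [heq, map_zero, zero_mul])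
  have hy0 : (s : R) - r ≠ 0 := by
    intro hsr
    have hsr' : (s : R) = r := sub_eq_zero.mp hsr
    apply he1
    rw [heq, ← hsr', ← hu, u.mul_inv]
  have hmul : r * ((s : R) - r) = 0 := by linear_combination -hr
  have hxy : r ≠ (s : R) - r := by
    intro hrr
    have hr2 : r * r = 0 := by linear_combination hmul + r * hrr
    have : r * (s : R) = 0 := by linear_combination hr2 - hr
    exact hx0 (s.2.2 r this)
  have hZx : IsZD r := ⟨(s : R) - r, hy0, hmul⟩
  have hZy : IsZD ((s : R) - r) := ⟨r, hx0, by rw [mul_comm]; exact hmul⟩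
  have := (h r ((s : R) - r) hZx hx0 hZy hy0 hxy).mp (Or.inl hmul)
  obtain ⟨t, ht0, ht⟩ := this
  have : t * (s : R) = 0 := by rw [mul_comm]; rw [show r + ((s:R) - r) = (s : R) by ring] at ht; exact ht
  exact ht0 (s.2.2 t this)

lemma idem_to_tilde {R : Type} [CommRing R] [Nontrivial R]
    (h : ∀ e : FractionRing R, e * e = e → e = 0 ∨ e = 1) : TildeEqZStar R := by
  intro x y hx hx0 hy hy0 hxy
  constructor
  · rintro (hmul | hzd)
    · by_contra hns
      have hmem : x + y ∈ nonZeroDivisors R := by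
        rw [mem_nonZeroDivisors_iff_right]
        intro z hz
        by_contra hz0
        exact hns ⟨z, hz0, by rw [mul_comm]; exact hz⟩
      set a := algebraMap R (FractionRing R) with ha
      obtain ⟨u, hu⟩ := IsLocalization.map_units (FractionRing R)
        (⟨x + y, hmem⟩ : nonZeroDivisors R)
      have hxx : a x * a x = a x * ↑u := by
        rw [hu, ← map_mul, ← map_mul]
        congr 1
        rw [mul_add, hmul, add_zero]
      set e := a x * ↑u⁻¹ with hedef
      have he : e * e = e := by
        have h2 : (u : FractionRing R) * ↑u⁻¹ = 1 := u.mul_inv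
        calc e * e = (a x * a x) * (↑u⁻¹ * ↑u⁻¹) := by rw [hedef]; ring
          _ = (a x * ↑u) * (↑u⁻¹ * ↑u⁻¹) := by rw [hxx]
          _ = a x * ↑u⁻¹ * (↑u * ↑u⁻¹) := by ring
          _ = e := by rw [h2, mul_one, hedef]
      have heu : e * ↑u = a x := by
        rw [hedef, mul_assoc, u.inv_mul, mul_one]
      rcases h e he with h0 | h1
      · have : a x = 0 := by rw [← heu, h0, zero_mul]
        exact hx0 (IsFractionRing.to_map_eq_zero_iff.mp this)
      · have : a x = a (x + y) := by rw [← heu, h1, one_mul, hu]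
        have := IsFractionRing.injective R (FractionRing R) this
        exact hy0 (left_eq_add.mp this)
    · exact hzd
  · exact Or.inr

theorem stmt13 (R : Type) [CommRing R] [Nontrivial R] :
    (TildeEqZStar R ↔ ¬ IsDecomposableRing (FractionRing R)) ∧
    (TildeEqZStar R ↔ ∀ e : FractionRing R, e * e = e → e = 0 ∨ e = 1) := by
  have h2 : TildeEqZStar R ↔ ∀ e : FractionRing R, e * e = e → e = 0 ∨ e = 1 :=
    ⟨tilde_to_idem, idem_to_tilde⟩
  have h3 : (¬ IsDecomposableRing (FractionRing R)) ↔
      ∀ e : FractionRing R, e * e = e → e = 0 ∨ e = 1 := by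
    rw [idem_iff_decomp]
    constructor
    · intro h e he
      by_contra hc
      push_neg at hc
      exact h ⟨e, he, hc.1, hc.2⟩
    · rintro h ⟨e, he, he0, he1⟩
      rcases h e he with h0 | h1
      · exact he0 h0
      · exact he1 h1
  exact ⟨h2.trans h3.symm, h2⟩
end

section
/- Let R be a commutative ring in which every non-unit is a zero-divisor. Then Γ̃(R) = Z*(Γ(R)) if and only if R has no idempotents other than 0 and 1. -/
theorem stmt14 (R : Type) [CommRing R] [Nontrivial R]
    (h : ∀ x : R, ¬ IsUnit x → IsZD x) :
    TildeEqZStar R ↔ ∀ e : R, e * e = e → e = 0 ∨ e = 1 := by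
  constructor
  · intro ht e he
    by_contra hc
    push_neg at hc
    obtain ⟨he0, he1⟩ := hc
    have h1e : (1 : R) - e ≠ 0 := by
      intro h0
      exact he1 (by linear_combination -h0)
    have hprod : e * (1 - e) = 0 := by ring_nf; linear_combination -he
    have hzd1 : IsZD e := ⟨1 - e, h1e, hprod⟩
    have hzd2 : IsZD (1 - e) := ⟨e, he0, by linear_combination hprod⟩
    have hne : e ≠ 1 - e := by
      intro hq
      apply he0
      calc e = e * e := he.symm
        _ = e * (1 - e) := by rw [← hq]
        _ = 0 := hprod
    have := (ht e (1 - e) hzd1 he0 hzd2 h1e hne).mp (Or.inl hprod)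
    obtain ⟨y, hy0, hy⟩ := this
    apply hy0
    have : e + (1 - e) = 1 := by ring
    rw [this, one_mul] at hy
    exact hy
  · intro hid x y hx hx0 hy hy0 hxy
    constructor
    · rintro (hxy0 | hzd)
      · by_contra hnzd
        have hu : IsUnit (x + y) := by
          by_contra hnu
          exact hnzd (h _ hnu)
        obtain ⟨v, hv⟩ := isUnit_iff_exists_inv.mp hu
        have he : (x * v) * (x * v) = x * v := by
          calc (x * v) * (x * v) = (x * (x + y)) * (v * v) - (x * y) * (v * v) := by ring
            _ = (x * (x + y)) * (v * v) := by rw [hxy0]; ring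
            _ = x * ((x + y) * v) * v := by ring
            _ = x * v := by rw [hv]; ring
        rcases hid _ he with h0 | h1
        · apply hx0
          calc x = x * ((x + y) * v) := by rw [hv]; ring
            _ = x * (x * v) + (x * y) * v := by ring
            _ = 0 := by rw [h0, hxy0]; ring
        · apply hy0
          calc y = y * (x * v) := by rw [h1]; ring
            _ = (x * y) * v := by ring
            _ = 0 := by rw [hxy0]; ring
      · exact hzd
    · exact Or.inr
end

section
/- Let R be a reduced Noetherian commutative ring. Then Γ̃(R) = Z*(Γ(R)) if and only if Z(R) is an ideal of R. -/
/-- In a reduced ring, every element of a minimal prime is a zero divisor. -/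
lemma aux_mem_minPrime_isZD {R : Type} [CommRing R] [IsReduced R] {P : Ideal R}
    (hP : P ∈ minimalPrimes R) {x : R} (hx : x ∈ P) : IsZD x := by
  haveI : P.IsPrime := hP.1.1
  have hxm : algebraMap R (Localization P.primeCompl) x ∈
      IsLocalRing.maximalIdeal (Localization P.primeCompl) :=
    (IsLocalization.AtPrime.to_map_mem_maximal_iff _ P x).mpr hx
  haveI := Ring.KrullDimLE.of_isLocalization P hP (Localization P.primeCompl)
  have hnil := (Ring.KrullDimLE.isNilpotent_iff_mem_maximalIdeal).mpr hxm
  obtain ⟨n, hn⟩ := hnil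
  rw [← map_pow, IsLocalization.map_eq_zero_iff P.primeCompl] at hn
  obtain ⟨m, hm⟩ := hn
  refine ⟨m, fun h0 => m.2 (h0 ▸ P.zero_mem), ?_⟩
  have h0 : (x * (m : R)) ^ (n + 1) = 0 := by
    have hr : (x * (m : R)) ^ (n + 1) = ((m : R) * x ^ n) * (x * (m : R) ^ n) := by ring
    rw [hr, hm, zero_mul]
  exact (IsNilpotent.eq_zero ⟨n + 1, h0⟩ : x * (m : R) = 0)

/-- In a reduced ring, the intersection of the minimal primes is zero. -/
lemma aux_sInf_minPrimes {R : Type} [CommRing R] [IsReduced R] :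
    sInf (minimalPrimes R) = (⊥ : Ideal R) := by
  have h : sInf ((⊥ : Ideal R).minimalPrimes) = (⊥ : Ideal R).radical :=
    Ideal.sInf_minimalPrimes
  have h2 : (⊥ : Ideal R).radical = nilradical R := rfl
  rw [minimalPrimes, h, h2, nilradical_eq_zero]
  rfl

/-- In a reduced ring, every zero divisor lies in some minimal prime. -/
lemma aux_ZD_mem_minPrime {R : Type} [CommRing R] [IsReduced R] {x : R} (hx : IsZD x) :
    ∃ P ∈ minimalPrimes R, x ∈ P := by
  obtain ⟨a, ha, hxa⟩ := hx
  have hnot : a ∉ sInf (minimalPrimes R) := by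
    rw [aux_sInf_minPrimes]; simpa using ha
  rw [Ideal.mem_sInf] at hnot
  push_neg at hnot
  obtain ⟨P, hP, haP⟩ := hnot
  haveI : P.IsPrime := hP.1.1
  refine ⟨P, hP, ?_⟩
  have : x * a ∈ P := hxa ▸ P.zero_mem
  rcases ‹P.IsPrime›.mem_or_mem this with h | h
  · exact h
  · exact absurd h haP

theorem stmt16 (R : Type) [CommRing R] [Nontrivial R] [IsReduced R] [IsNoetherianRing R] :
    TildeEqZStar R ↔ ∃ I : Ideal R, (I : Set R) = {x | IsZD x} := by
  constructor
  · intro h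
    have hfin : (minimalPrimes R).Finite := minimalPrimes.finite_of_isNoetherianRing R
    obtain ⟨M, hM⟩ := Ideal.exists_maximal R
    haveI := hM.isPrime
    obtain ⟨P₀, hP₀, _⟩ := Ideal.exists_minimalPrimes_le (I := (⊥ : Ideal R)) (J := M) bot_le
    -- minimal primes are pairwise equal under the hypothesis
    have hsub : ∀ P ∈ minimalPrimes R, ∀ Q ∈ minimalPrimes R, P = Q := by
      classical
      intro P hP Q hQ
      by_contra hne
      haveI hPp : P.IsPrime := hP.1.1
      haveI hQp : Q.IsPrime := hQ.1.1
      set F := hfin.toFinset with hF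
      have hPF : P ∈ F := hfin.mem_toFinset.mpr hP
      have hQF : Q ∈ F := hfin.mem_toFinset.mpr hQ
      have hQeF : Q ∈ F.erase P := Finset.mem_erase.mpr ⟨fun e => hne e.symm, hQF⟩
      -- pick x in all minimal primes except P, but not in P
      have h1 : ¬ ((F.erase P).inf id ≤ P) := by
        intro hle
        obtain ⟨T, hT, hTle⟩ := (Ideal.IsPrime.inf_le' hPp).mp hle
        have hTmin : T ∈ minimalPrimes R := hfin.mem_toFinset.mp (Finset.mem_of_mem_erase hT)
        have hPT : P ≤ T := hP.2 ⟨hTmin.1.1, bot_le⟩ hTle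
        exact (Finset.mem_erase.mp hT).1 (le_antisymm hTle hPT)
      obtain ⟨x, hxinf, hxP⟩ := SetLike.not_le_iff_exists.mp h1
      have hxmem : ∀ T ∈ F.erase P, x ∈ T := fun T hT => Submodule.mem_finsetInf.mp hxinf T hT
      -- pick y in P avoiding all other minimal primes
      have h2 : ¬ ((P : Set R) ⊆ ⋃ T ∈ (↑(F.erase P) : Set (Ideal R)), (T : Set R)) := by
        intro hle
        rw [Ideal.subset_union_prime (f := fun T : Ideal R => T) P P
          (fun T hT _ _ => (hfin.mem_toFinset.mp (Finset.mem_of_mem_erase hT)).1.1)] at hle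
        obtain ⟨T, hT, hPT⟩ := hle
        have hTmin : T ∈ minimalPrimes R := hfin.mem_toFinset.mp (Finset.mem_of_mem_erase hT)
        have hTP : T ≤ P := hTmin.2 ⟨hPp, bot_le⟩ hPT
        exact (Finset.mem_erase.mp hT).1 (le_antisymm hTP hPT)
      obtain ⟨y, hyP, hyU⟩ := Set.not_subset.mp h2
      have hyT : ∀ T ∈ F.erase P, y ∉ T := fun T hT hy =>
        hyU (Set.mem_biUnion (Finset.mem_coe.mpr hT) hy)
      -- x * y = 0
      have hxy0 : x * y = 0 := by
        have hmem : x * y ∈ sInf (minimalPrimes R) := by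
          rw [Ideal.mem_sInf]
          intro T hT
          by_cases hTP : T = P
          · subst hTP; exact T.mul_mem_left x hyP
          · exact T.mul_mem_right y
              (hxmem T (Finset.mem_erase.mpr ⟨hTP, hfin.mem_toFinset.mpr hT⟩))
        rwa [aux_sInf_minPrimes] at hmem
      -- apply the hypothesis
      have hxZD : IsZD x := aux_mem_minPrime_isZD hQ (hxmem Q hQeF)
      have hyZD : IsZD y := aux_mem_minPrime_isZD hP hyP
      have hx0 : x ≠ 0 := fun e => hxP (e ▸ P.zero_mem)
      have hy0 : y ≠ 0 := fun e => hyT Q hQeF (e ▸ Q.zero_mem)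
      have hxney : x ≠ y := fun e => hxP (e ▸ hyP)
      have hZD : IsZD (x + y) := (h x y hxZD hx0 hyZD hy0 hxney).mp (Or.inl hxy0)
      obtain ⟨T, hTmin, hmemT⟩ := aux_ZD_mem_minPrime hZD
      by_cases hTP : T = P
      · subst hTP
        have : x ∈ T := by
          have := T.sub_mem hmemT hyP
          simpa using this
        exact hxP this
      · have hTe : T ∈ F.erase P := Finset.mem_erase.mpr ⟨hTP, hfin.mem_toFinset.mpr hTmin⟩
        have : y ∈ T := by
          have := T.sub_mem hmemT (hxmem T hTe)
          simpa using this
        exact hyT T hTe this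
    refine ⟨P₀, ?_⟩
    ext z
    simp only [SetLike.mem_coe, Set.mem_setOf_eq]
    constructor
    · exact fun hz => aux_mem_minPrime_isZD hP₀ hz
    · intro hz
      obtain ⟨P, hP, hzP⟩ := aux_ZD_mem_minPrime hz
      rwa [hsub P₀ hP₀ P hP]
  · rintro ⟨I, hI⟩ x y hx _ hy _ _
    have hxI : x ∈ I := by rw [← SetLike.mem_coe, hI]; exact hx
    have hyI : y ∈ I := by rw [← SetLike.mem_coe, hI]; exact hy
    have hxy : IsZD (x + y) := by
      have : x + y ∈ (I : Set R) := I.add_mem hxI hyI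
      rwa [hI] at this
    exact ⟨fun _ => hxy, fun h' => Or.inr h'⟩
end

section
/- Let R be a commutative ring with at least three nonzero zero-divisors, i.e., |Z(R)*| ≥ 3. Then Γ̃(R) is hypertriangulated: every edge of Γ̃(R) lies in a triangle. -/
lemma exists_third {R : Type} [CommRing R]
    (h : 3 ≤ Cardinal.mk {x : R // IsZD x ∧ x ≠ 0}) (x y : R) :
    ∃ w : R, IsZD w ∧ w ≠ 0 ∧ w ≠ x ∧ w ≠ y := by
  by_contra hc
  push_neg at hc
  -- hc : ∀ w, IsZD w → w ≠ 0 → w ≠ x → w = y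
  have hmem : ∀ s : {x : R // IsZD x ∧ x ≠ 0}, (s.1 : R) ∈ ({x, y} : Set R) := by
    intro s
    rcases eq_or_ne s.1 x with hs | hs
    · exact Or.inl hs
    · exact Or.inr (hc s.1 s.2.1 s.2.2 hs)
  have hinj : Function.Injective
      (fun s : {x : R // IsZD x ∧ x ≠ 0} => (⟨s.1, hmem s⟩ : ({x, y} : Set R))) := by
    intro s t hst
    simp only [Subtype.mk.injEq] at hst
    exact Subtype.ext hst
  have h2 : Cardinal.mk {x : R // IsZD x ∧ x ≠ 0} ≤ Cardinal.mk ({x, y} : Set R) :=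
    Cardinal.mk_le_of_injective hinj
  have h3 : Cardinal.mk ({x, y} : Set R) ≤ 2 := by
    have := Cardinal.mk_insert_le (α := R) (s := ({y} : Set R)) (a := x)
    refine this.trans ?_
    simp
    norm_num
  have : (3 : Cardinal) ≤ 2 := le_trans h (le_trans h2 h3)
  norm_num at this

theorem stmt17 (R : Type) [CommRing R] [Nontrivial R]
    (h : 3 ≤ Cardinal.mk {x : R // IsZD x ∧ x ≠ 0}) :
    ∀ x y : R, IsZD x → x ≠ 0 → IsZD y → y ≠ 0 → x ≠ y → GTAdj x y →
      ∃ z : R, IsZD z ∧ z ≠ 0 ∧ z ≠ x ∧ z ≠ y ∧ GTAdj z x ∧ GTAdj z y := by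
  intro x y hx hx0 hy hy0 hxyne hadj
  by_cases hmul : x * y = 0
  · -- Case I : x*y = 0
    by_cases hA : ∃ z, x * z = 0 ∧ z ≠ 0 ∧ z ≠ x ∧ z ≠ y
    · obtain ⟨z, hz1, hz0, hzx, hzy⟩ := hA
      exact ⟨z, ⟨x, hx0, by rw [mul_comm]; exact hz1⟩, hz0, hzx, hzy,
        Or.inl (by rw [mul_comm]; exact hz1),
        Or.inr ⟨x, hx0, by linear_combination hz1 + hmul⟩⟩
    · by_cases hB : ∃ z, y * z = 0 ∧ z ≠ 0 ∧ z ≠ x ∧ z ≠ y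
      · obtain ⟨z, hz1, hz0, hzx, hzy⟩ := hB
        exact ⟨z, ⟨y, hy0, by rw [mul_comm]; exact hz1⟩, hz0, hzx, hzy,
          Or.inr ⟨y, hy0, by linear_combination hz1 + hmul⟩,
          Or.inl (by rw [mul_comm]; exact hz1)⟩
      · exfalso
        push_neg at hA hB
        -- hA : ∀ z, x*z = 0 → z ≠ 0 → z ≠ x → z = y, similarly hB
        obtain ⟨w, hw, hw0, hwx, hwy⟩ := exists_third h x y
        obtain ⟨c, hc0, hwc⟩ := hw
        have hxw : x * w = x ∨ x * w = y := by
          have h0 : x * w ≠ 0 := by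
            intro h0
            exact hwy (hA w h0 hw0 hwx)
          have hyxw : y * (x * w) = 0 := by linear_combination w * hmul
          rcases eq_or_ne (x * w) x with hh | hh
          · exact Or.inl hh
          · exact Or.inr (hB (x * w) hyxw h0 hh)
        have hyw : y * w = x ∨ y * w = y := by
          have h0 : y * w ≠ 0 := by
            intro h0
            exact hwy (hB w h0 hw0 hwx)
          rcases eq_or_ne (y * w) x with hh | hh
          · exact Or.inl hh
          · exact Or.inr (hA (y * w) (by linear_combination w * hmul) h0 hh)
        have hcmem : c = x ∨ c = y := by
          rcases hxw with hh | hh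
          · have hxc : x * c = 0 := by linear_combination x * hwc - c * hh
            rcases eq_or_ne c x with h' | h'
            · exact Or.inl h'
            · exact Or.inr (hA c hxc hc0 h')
          · have hyc : y * c = 0 := by linear_combination x * hwc - c * hh
            rcases eq_or_ne c x with h' | h'
            · exact Or.inl h'
            · exact Or.inr (hB c hyc hc0 h')
        rcases hcmem with h' | h'
        · have hxw0 : x * w = 0 := by rw [← h']; linear_combination hwc
          rcases hxw with hh | hh
          · exact hx0 (by rw [← hh]; exact hxw0)
          · exact hy0 (by rw [← hh]; exact hxw0)
        · have hyw0 : y * w = 0 := by rw [← h']; linear_combination hwc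
          rcases hyw with hh | hh
          · exact hx0 (by rw [← hh]; exact hyw0)
          · exact hy0 (by rw [← hh]; exact hyw0)
  · -- Case II : x*y ≠ 0, so IsZD (x+y)
    have hs : IsZD (x + y) := hadj.resolve_left hmul
    by_cases h1 : 2 * x + y = 0
    · obtain ⟨a, ha0, hxa⟩ := hx
      have hax : a ≠ x := by
        intro hh; subst hh
        exact hmul (by linear_combination a * h1 - 2 * hxa)
      have hay : a ≠ y := by
        intro hh
        exact hmul (hh ▸ hxa)
      exact ⟨a, ⟨x, hx0, by rw [mul_comm]; exact hxa⟩, ha0, hax, hay,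
        Or.inl (by rw [mul_comm]; exact hxa),
        Or.inl (by linear_combination a * h1 - 2 * hxa)⟩
    · by_cases h2 : x + 2 * y = 0
      · obtain ⟨a, ha0, hya⟩ := hy
        have hay : a ≠ y := by
          intro hh; subst hh
          exact hmul (by linear_combination a * h2 - 2 * hya)
        have hax : a ≠ x := by
          intro hh; subst hh
          exact hmul (by linear_combination hya)
        exact ⟨a, ⟨y, hy0, by rw [mul_comm]; exact hya⟩, ha0, hax, hay,
          Or.inl (by linear_combination a * h2 - 2 * hya),
          Or.inl (by rw [mul_comm]; exact hya)⟩
      · by_cases h0 : x + y = 0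
        · obtain ⟨a, ha0, hxa⟩ := hx
          have hax : a ≠ x := by
            intro hh; subst hh
            exact hmul (by linear_combination a * h0 - hxa)
          have hay : a ≠ y := by
            intro hh
            exact hmul (hh ▸ hxa)
          exact ⟨a, ⟨x, hx0, by rw [mul_comm]; exact hxa⟩, ha0, hax, hay,
            Or.inl (by rw [mul_comm]; exact hxa),
            Or.inl (by linear_combination a * h0 - hxa)⟩
        · obtain ⟨c, hc0, hsc⟩ := hs
          obtain ⟨d, hd0, hyd⟩ := hy
          obtain ⟨e, he0, hxe⟩ := hx
          refine ⟨-(x + y), ⟨c, hc0, by linear_combination -hsc⟩,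
            fun hh => h0 (by linear_combination -hh), ?_, ?_, ?_, ?_⟩
          · intro hh; exact h1 (by linear_combination -hh)
          · intro hh; exact h2 (by linear_combination -hh)
          · exact Or.inr ⟨d, hd0, by linear_combination -hyd⟩
          · exact Or.inr ⟨e, he0, by linear_combination -hxe⟩
end

section
/- Let R be a commutative ring in which the zero ideal has a primary decomposition (e.g., R Noetherian) and suppose Z(R)* is nonempty. Then there exists a ∈ Z(R)* adjacent in Γ̃(R) to every other vertex: for all x ∈ Z(R)* with x ≠ a, either ax = 0 or a + x ∈ Z(R). -/
theorem stmt18 (R : Type) [CommRing R] [Nontrivial R]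
    (hdec : ∃ s : Finset (Ideal R), (∀ I ∈ s, I.IsPrimary) ∧ s.inf id = ⊥)
    (hne : ∃ x : R, IsZD x ∧ x ≠ 0) :
    ∃ a : R, IsZD a ∧ a ≠ 0 ∧
      ∀ x : R, IsZD x → x ≠ 0 → x ≠ a → (a * x = 0 ∨ IsZD (a + x)) := by
  classical
  obtain ⟨s0, hprim0, hinf0⟩ := hdec
  have hex : ∃ n, ∃ s : Finset (Ideal R), s.card = n ∧ (∀ I ∈ s, I.IsPrimary) ∧ s.inf id = ⊥ :=
    ⟨s0.card, s0, rfl, hprim0, hinf0⟩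
  obtain ⟨s, hcard, hprim, hinf⟩ := Nat.find_spec hex
  -- irredundancy of the minimal decomposition
  have hirr : ∀ Q ∈ s, ∃ a, a ∉ Q ∧ ∀ J ∈ s.erase Q, a ∈ J := by
    intro Q hQ
    by_contra h
    push_neg at h
    have hle : (s.erase Q).inf id ≤ Q := by
      intro a ha
      by_contra haQ
      obtain ⟨J, hJ, haJ⟩ := h a haQ
      exact haJ (Finset.inf_le (f := id) hJ ha)
    have hbot : (s.erase Q).inf id = ⊥ := by
      have h1 : s.inf id = id Q ⊓ (s.erase Q).inf id := by
        conv_lhs => rw [← Finset.insert_erase hQ]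
        rw [Finset.inf_insert]
      have h2 : (s.erase Q).inf id ≤ s.inf id := by
        rw [h1]
        exact le_inf hle le_rfl
      rw [hinf] at h2
      exact le_bot_iff.mp h2
    have hlt : (s.erase Q).card < Nat.find hex := by
      rw [← hcard]; exact Finset.card_erase_lt_of_mem hQ
    exact Nat.find_min hex hlt ⟨s.erase Q, rfl,
      fun I hI => hprim I (Finset.mem_of_mem_erase hI), hbot⟩
  -- every element of a radical of some Q ∈ s is a zero-divisor
  have F1 : ∀ Q ∈ s, ∀ r ∈ Q.radical, IsZD r := by
    intro Q hQ r hr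
    obtain ⟨a, haQ, haJ⟩ := hirr Q hQ
    have ha0 : a ≠ 0 := fun h => haQ (h ▸ Q.zero_mem)
    obtain ⟨k, hk⟩ := hr
    have hk0 : r ^ k * a = 0 := by
      have : r ^ k * a ∈ s.inf id := by
        rw [Submodule.mem_finsetInf]
        intro J hJ
        by_cases hJQ : J = Q
        · subst hJQ; exact Ideal.mul_mem_right _ _ hk
        · exact Ideal.mul_mem_left _ _ (haJ J (Finset.mem_erase.mpr ⟨hJQ, hJ⟩))
      rwa [hinf, Ideal.mem_bot] at this
    have hexm : ∃ m, r ^ m * a = 0 := ⟨k, hk0⟩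
    set m := Nat.find hexm with hm
    have hm0 : r ^ m * a = 0 := Nat.find_spec hexm
    have hmne : m ≠ 0 := by
      intro h
      rw [h, pow_zero, one_mul] at hm0
      exact ha0 hm0
    refine ⟨r ^ (m - 1) * a, ?_, ?_⟩
    · exact Nat.find_min hexm (Nat.sub_lt (Nat.pos_of_ne_zero hmne) one_pos)
    · rw [← mul_assoc, ← pow_succ', Nat.sub_add_cancel (Nat.one_le_iff_ne_zero.mpr hmne)]
      exact hm0
  -- every nonzero zero-divisor lies in some radical
  have F2 : ∀ x : R, IsZD x → ∃ Q ∈ s, x ∈ Q.radical := by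
    rintro x ⟨y, hy0, hxy⟩
    have : y ∉ s.inf id := by rw [hinf, Ideal.mem_bot]; exact hy0
    rw [Submodule.mem_finsetInf] at this
    push_neg at this
    obtain ⟨Q, hQ, hyQ⟩ := this
    have hyx : y * x ∈ Q := by rw [mul_comm, hxy]; exact Q.zero_mem
    rcases (Ideal.isPrimary_iff.mp (hprim Q hQ)).2 hyx with h | h
    · exact absurd h hyQ
    · exact ⟨Q, hQ, h⟩
  obtain ⟨x0, hx0zd, hx00⟩ := hne
  obtain ⟨Q0, hQ0, _⟩ := F2 x0 hx0zd
  by_cases hred : ∀ b : R, IsNilpotent b → b = 0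
  · -- reduced case
    -- radicals intersect to ⊥
    have hrad0 : ∀ r : R, (∀ Q ∈ s, r ∈ Q.radical) → r = 0 := by
      intro r hr
      have key : ∀ t : Finset (Ideal R), (∀ Q ∈ t, r ∈ Q.radical) → r ∈ (t.inf id).radical := by
        intro t
        induction t using Finset.induction_on with
        | empty => intro _; rw [Finset.inf_empty]; exact ⟨1, trivial⟩
        | insert _ _ hni ih =>
          rename_i J t
          intro h
          rw [Finset.inf_insert]
          obtain ⟨k1, hk1⟩ := h J (Finset.mem_insert_self J t)
          obtain ⟨k2, hk2⟩ := ih fun Q hQ => h Q (Finset.mem_insert_of_mem hQ)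
          exact ⟨k1 + k2, pow_add r k1 k2 ▸
            ⟨Ideal.mul_mem_right _ _ hk1, Ideal.mul_mem_left _ _ hk2⟩⟩
      obtain ⟨k, hk⟩ := key s hr
      rw [hinf, Ideal.mem_bot] at hk
      exact hred r ⟨k, hk⟩
    obtain ⟨a, haQ0, haJ⟩ := hirr Q0 hQ0
    have ha0 : a ≠ 0 := fun h => haQ0 (h ▸ Q0.zero_mem)
    -- a annihilates the radical of Q0
    have hPa : ∀ p ∈ Q0.radical, a * p = 0 := by
      intro p hp
      apply hrad0
      intro Q hQ
      by_cases hQQ0 : Q = Q0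
      · subst hQQ0; exact Ideal.mul_mem_left _ _ hp
      · exact Ideal.mul_mem_right _ _
          (Ideal.le_radical (haJ Q (Finset.mem_erase.mpr ⟨hQQ0, hQ⟩)))
    -- the radical of Q0 contains a nonzero element
    have hprime : (Ideal.radical Q0).IsPrime := Ideal.isPrime_radical (hprim Q0 hQ0)
    have hp : ∃ p ∈ Q0.radical, p ≠ 0 := by
      by_contra h
      push_neg at h
      obtain ⟨y, hy0, hxy⟩ := hx0zd
      have : x0 * y ∈ Q0.radical := by rw [hxy]; exact (Q0.radical).zero_mem
      rcases hprime.mem_or_mem this with h' | h'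
      · exact hx00 (h _ h')
      · exact hy0 (h _ h')
    obtain ⟨p, hpQ, hp0⟩ := hp
    refine ⟨a, ⟨p, hp0, hPa p hpQ⟩, ha0, ?_⟩
    intro x hx hx0 _
    by_cases hax : a * x = 0
    · exact Or.inl hax
    · right
      obtain ⟨Q, hQ, hxQ⟩ := F2 x hx
      have hQQ0 : Q ≠ Q0 := by
        intro h
        exact hax (hPa x (h ▸ hxQ))
      have haQ : a ∈ Q.radical :=
        Ideal.le_radical (haJ Q (Finset.mem_erase.mpr ⟨hQQ0, hQ⟩))
      exact F1 Q hQ (a + x) ((Q.radical).add_mem haQ hxQ)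
  · -- non-reduced case: take a nonzero nilpotent
    push_neg at hred
    obtain ⟨b, ⟨n, hn⟩, hb0⟩ := hred
    have hbrad : ∀ Q ∈ s, b ∈ Q.radical := fun Q _ => ⟨n, hn ▸ Q.zero_mem⟩
    refine ⟨b, F1 Q0 hQ0 b (hbrad Q0 hQ0), hb0, ?_⟩
    intro x hx hx0 _
    right
    obtain ⟨Q, hQ, hxQ⟩ := F2 x hx
    exact F1 Q hQ (b + x) ((Q.radical).add_mem (hbrad Q hQ) hxQ)
end
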